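/- arXiv:1306.6744 — 2 statements merged into one kernel-verified Lean document; each statement's English description precedes it below -/
import Mathlib

section
/- Fix a Dyck path β of length 2n+2. The number of permutations w of {1,...,2n} whose crossout B-path p_B(w) equals β is 1·3·5···(2n-1) · ∏_{i=1}^n h_i*(β). -/
open Finset

/-- `D ⊆ {1,…,L}` is the set of down steps of a Dyck path of length `L`:
it has `L/2` elements and every prefix has at least as many up steps as down steps. -/
def IsDyck (L : ℕ) (D : Finset ℕ) : Prop :=
  D ⊆ Finset.Icc 1 L ∧ 2 * D.card = L ∧ ∀ k ≤ L, 2 * (D.filter (· ≤ k)).card ≤ k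

instance (L : ℕ) : DecidablePred (IsDyck L) := fun D => by
  unfold IsDyck; infer_instance

/-- The collection of all Dyck paths (encoded by their down-step sets) of length `L`. -/
def dyckPaths (L : ℕ) : Finset (Finset ℕ) :=
  (Finset.Icc 1 L).powerset.filter (IsDyck L)

/-- The position (in `{1,…,L}`) of the `i`-th down step (`1`-indexed). -/
def dstep (D : Finset ℕ) (i : ℕ) : ℕ := (D.sort (· ≤ ·)).getD (i - 1) 0

/-- The height `h_i` of the `i`-th down step of a Dyck path:  the step goes from
`(d_i - 1, h_i)` to `(d_i, h_i - 1)`; equivalently `h_i = d_i + 1 - 2 i`. -/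
def ht (D : Finset ℕ) (i : ℕ) : ℕ := dstep D i + 1 - 2 * i

/-- The modified height `h_i^*`: equal to `h_i - 1` if there is no up step to the right of
the `i`-th down step, and to `h_i` otherwise. -/
def hstar (L : ℕ) (D : Finset ℕ) (i : ℕ) : ℕ :=
  if Finset.Ioc (dstep D i) L ⊆ D then ht D i - 1 else ht D i

/-- `crossout w k` is the pair (positions marked A, positions marked B) after `k` rounds of
the crossout procedure: in each round, first mark B at the unmarked position with the smallest
value `w i`, then mark A at the leftmost unmarked position. -/
def crossout {N : ℕ} (w : Equiv.Perm (Fin N)) : ℕ → Finset (Fin N) × Finset (Fin N)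
  | 0 => (∅, ∅)
  | k + 1 =>
    let p := crossout w k
    let u := (Finset.univ : Finset (Fin N)) \ (p.1 ∪ p.2)
    if hu : u.Nonempty then
      let b := w.symm ((u.image w).min' (hu.image _))
      if ha : (u.erase b).Nonempty then
        (insert ((u.erase b).min' ha) p.1, insert b p.2)
      else (p.1, insert b p.2)
    else p

/-- The set of positions marked A under the crossout procedure. -/
def markA {N : ℕ} (w : Equiv.Perm (Fin N)) : Finset (Fin N) := (crossout w N).1

/-- The set of positions marked B under the crossout procedure. -/
def markB {N : ℕ} (w : Equiv.Perm (Fin N)) : Finset (Fin N) := (crossout w N).2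

/-- Down-step set of Alice's path `p_A(w)`:  the values (in `{1,…,N}`) at positions marked A. -/
def pAset {N : ℕ} (w : Equiv.Perm (Fin N)) : Finset ℕ :=
  (markA w).image (fun a => Fin.val (w a) + 1)

/-- Down-step set of Bob's path `p_B(w)`:  `{b + 1 : b marked B} ∪ {N + 2}`
(positions taken in `{1,…,N}`, so `b + 1` becomes `(b : ℕ) + 2`). -/
def pBset {N : ℕ} (w : Equiv.Perm (Fin N)) : Finset ℕ :=
  insert (N + 2) ((markB w).image (fun b => Fin.val b + 2))

/-- Number of AA inversions of `w`. -/
def aaInv {N : ℕ} (w : Equiv.Perm (Fin N)) : ℕ :=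
  (Finset.univ.filter (fun p : Fin N × Fin N =>
    p.1 < p.2 ∧ w p.2 < w p.1 ∧ p.1 ∈ markA w ∧ p.2 ∈ markA w)).card

/-- Number of BB inversions of `w`. -/
def bbInv {N : ℕ} (w : Equiv.Perm (Fin N)) : ℕ :=
  (Finset.univ.filter (fun p : Fin N × Fin N =>
    p.1 < p.2 ∧ w p.2 < w p.1 ∧ p.1 ∈ markB w ∧ p.2 ∈ markB w)).card

/-- Number of AB inversions of `w`. -/
def abInv {N : ℕ} (w : Equiv.Perm (Fin N)) : ℕ :=
  (Finset.univ.filter (fun p : Fin N × Fin N =>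
    p.1 < p.2 ∧ w p.2 < w p.1 ∧ p.1 ∈ markA w ∧ p.2 ∈ markB w)).card

/-- Total number of inversions of `w`. -/
def invW {N : ℕ} (w : Equiv.Perm (Fin N)) : ℕ :=
  (Finset.univ.filter (fun p : Fin N × Fin N => p.1 < p.2 ∧ w p.2 < w p.1)).card

/-- The statistic `z(w) = #{i < j : w i < w j and i is marked B}`. -/
def zstat {N : ℕ} (w : Equiv.Perm (Fin N)) : ℕ :=
  (Finset.univ.filter (fun p : Fin N × Fin N =>
    p.1 < p.2 ∧ w p.1 < w p.2 ∧ p.1 ∈ markB w)).card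

/-- Label carried by the down step of `p_A` corresponding to the A-position `a`:
one plus the number of A-positions to the left of `a` with larger value. -/
def labelA {N : ℕ} (w : Equiv.Perm (Fin N)) (a : Fin N) : ℕ :=
  1 + ((markA w).filter (fun a' => a' < a ∧ w a < w a')).card

/-- The label sequence `ℓ` of `p_A(w)`: `ellSeq w r` is the label on the `r`-th down step. -/
def ellSeq {N : ℕ} (w : Equiv.Perm (Fin N)) (r : ℕ) : ℕ :=
  ∑ a ∈ (markA w).filter (fun a => Fin.val (w a) + 1 = dstep (pAset w) r), labelA w a

/-- Label carried by the down step of `p_B` corresponding to the B-position `b`: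
one plus the number of B-positions to the right of `b` with smaller value. -/
def labelB {N : ℕ} (w : Equiv.Perm (Fin N)) (b : Fin N) : ℕ :=
  1 + ((markB w).filter (fun b' => w b' < w b ∧ b < b')).card

/-- The label sequence `m` of `p_B(w)`: `emSeq w r` is the label on the `r`-th down step. -/
def emSeq {N : ℕ} (w : Equiv.Perm (Fin N)) (r : ℕ) : ℕ :=
  ∑ b ∈ (markB w).filter (fun b => Fin.val b + 2 = dstep (pBset w) r), labelB w b

/-- The `q`-integer `[k]_q = 1 + q + ⋯ + q^{k-1}` in `ℤ[q]`. -/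
noncomputable def qint (k : ℕ) : Polynomial ℤ := ∑ j ∈ Finset.range k, Polynomial.X ^ j

/-- The `q`-integer `[k]` in the variable `X v` of the two-variable polynomial ring. -/
noncomputable def qint2 (v : Fin 2) (k : ℕ) : MvPolynomial (Fin 2) ℤ :=
  ∑ j ∈ Finset.range k, (MvPolynomial.X v) ^ j

/-- `M` is a perfect matching of `{1,…,2n}`: a family of pairwise disjoint 2-element sets
whose union is `{1,…,2n}`. -/
def IsMatching (n : ℕ) (M : Finset (Finset ℕ)) : Prop :=
  (∀ e ∈ M, e.card = 2) ∧ (M : Set (Finset ℕ)).PairwiseDisjoint id ∧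
    M.biUnion id = Finset.Icc 1 (2 * n)



-- ==== auxiliary development ====

section Tools
variable {α : Type*} [LinearOrder α]

lemma filter_lt_orderEmbOfFin (s : Finset α) {m : ℕ} (h : s.card = m) (i : Fin m) :
    (s.filter (· < s.orderEmbOfFin h i)).card = i := by
  classical
  have himg : s.filter (· < s.orderEmbOfFin h i)
      = (univ.filter (fun j : Fin m => j < i)).image (s.orderEmbOfFin h) := by
    ext x
    simp only [mem_filter, mem_image, mem_univ, true_and]
    constructor
    · rintro ⟨hxs, hxlt⟩
      have : x ∈ Set.range (s.orderEmbOfFin h) := by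
        rw [Finset.range_orderEmbOfFin]; exact_mod_cast hxs
      obtain ⟨j, hj⟩ := this
      exact ⟨j, by rw [← hj] at hxlt; exact (s.orderEmbOfFin h).strictMono.lt_iff_lt.mp hxlt, hj⟩
    · rintro ⟨j, hji, rfl⟩
      exact ⟨Finset.orderEmbOfFin_mem s h j, (s.orderEmbOfFin h).strictMono hji⟩
  rw [himg, Finset.card_image_of_injective _ (s.orderEmbOfFin h).injective]
  have : univ.filter (fun j : Fin m => j < i) = Finset.Iio i := by
    ext j; simp
  rw [this, Fin.card_Iio]

lemma orderEmbOfFin_lt_iff (s : Finset α) {m : ℕ} (h : s.card = m) (i : Fin m) (x : α) :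
    s.orderEmbOfFin h i < x ↔ (i : ℕ) < (s.filter (· < x)).card := by
  classical
  constructor
  · intro hlt
    have hsub : (univ.filter (fun j : Fin m => j ≤ i)).image (s.orderEmbOfFin h)
        ⊆ s.filter (· < x) := by
      intro y hy
      simp only [mem_image, mem_filter, mem_univ, true_and] at hy ⊢
      obtain ⟨j, hji, rfl⟩ := hy
      exact ⟨Finset.orderEmbOfFin_mem s h j,
        lt_of_le_of_lt ((s.orderEmbOfFin h).monotone hji) hlt⟩
    have := Finset.card_le_card hsub
    rw [Finset.card_image_of_injective _ (s.orderEmbOfFin h).injective] at this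
    have hIic : univ.filter (fun j : Fin m => j ≤ i) = Finset.Iic i := by ext j; simp
    rw [hIic, Fin.card_Iic] at this
    omega
  · intro hlt
    by_contra hx
    push_neg at hx
    have hsub : s.filter (· < x) ⊆ (univ.filter (fun j : Fin m => j < i)).image (s.orderEmbOfFin h) := by
      intro y hy
      simp only [mem_filter] at hy
      have : y ∈ Set.range (s.orderEmbOfFin h) := by
        rw [Finset.range_orderEmbOfFin]; exact_mod_cast hy.1
      obtain ⟨j, rfl⟩ := this
      simp only [mem_image, mem_filter, mem_univ, true_and]
      exact ⟨j, (s.orderEmbOfFin h).strictMono.lt_iff_lt.mp (lt_of_lt_of_le hy.2 hx), rfl⟩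
    have := Finset.card_le_card hsub
    rw [Finset.card_image_of_injective _ (s.orderEmbOfFin h).injective] at this
    have hIio : univ.filter (fun j : Fin m => j < i) = Finset.Iio i := by ext j; simp
    rw [hIio, Fin.card_Iio] at this
    omega

end Tools

section NatFacts

lemma prod_even_eq (n : ℕ) : ∏ j ∈ Finset.range n, (2*n - 2*j) = 2^n * n.factorial := by
  have h1 : ∏ j ∈ Finset.range n, (2*n - 2*j) = ∏ j ∈ Finset.range n, (2*(j+1)) := by
    rw [← Finset.prod_range_reflect]
    apply Finset.prod_congr rfl
    intro j hj
    simp only [Finset.mem_range] at hj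
    omega
  rw [h1, Finset.prod_mul_distrib, Finset.prod_const, Finset.prod_range_add_one_eq_factorial, Finset.card_range]

lemma doublefact (n : ℕ) :
    (2*n).factorial = (∏ i ∈ Finset.range n, (2*i+1)) * (2^n * n.factorial) := by
  induction n with
  | zero => simp
  | succ n ih =>
    have h2 : 2*(n+1) = (2*n+1)+1 := by ring
    rw [h2, Nat.factorial_succ, Nat.factorial_succ, ih, Finset.prod_range_succ,
      Nat.factorial_succ, pow_succ]
    ring

end NatFacts
open Finset


lemma dstep_orderEmbOfFin (s : Finset ℕ) {m : ℕ} (h : s.card = m) (i : Fin m) :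
    dstep s ((i : ℕ)+1) = s.orderEmbOfFin h i := by
  rw [dstep, Finset.orderEmbOfFin_apply]
  simp only [Nat.add_sub_cancel]
  rw [List.getD_eq_getElem _ _ (by rw [Finset.length_sort, h]; exact i.2)]
  simp [Fin.getElem_fin]

lemma min'_congr' {α : Type*} [LinearOrder α] (s1 s2 : Finset α) (h1 : s1.Nonempty)
    (h2 : s2.Nonempty) (h : s1 = s2) : s1.min' h1 = s2.min' h2 := by subst h; rfl

section Swap
variable {N : ℕ}

lemma swap_count (V : Finset (Fin N)) (t : Fin N) (htV : t ∈ V)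
    (P : Equiv.Perm (Fin N) → Prop) [DecidablePred P]
    (hP : ∀ (u v : Fin N), u ∈ V → v ∈ V → ∀ w, P w → P (w * Equiv.swap u v)) :
    (univ.filter fun w => P w ∧ ∀ x ∈ V, x ≠ t → w t < w x).card * V.card
      = (univ.filter fun w => P w).card := by
  classical
  have hVne : V.Nonempty := ⟨t, htV⟩
  set Θ : Equiv.Perm (Fin N) → Fin N :=
    fun w => w.symm ((V.image w).min' (hVne.image w)) with hΘdef
  have key : ∀ w : Equiv.Perm (Fin N), w (Θ w) = (V.image w).min' (hVne.image w) :=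
    fun w => w.apply_symm_apply _
  have hΘmem : ∀ w, Θ w ∈ V := by
    intro w
    obtain ⟨v, hv, hvw⟩ := Finset.mem_image.mp (Finset.min'_mem (V.image w) (hVne.image w))
    have : Θ w = v := by rw [hΘdef]; simp only [← hvw, Equiv.symm_apply_apply]
    rwa [this]
  have hchar : ∀ w : Equiv.Perm (Fin N), (Θ w = t ↔ ∀ x ∈ V, x ≠ t → w t < w x) := by
    intro w
    constructor
    · intro hΘt x hx hxt
      have h1 : w t ≤ w x := by
        rw [← hΘt, key]
        exact Finset.min'_le _ _ (Finset.mem_image_of_mem w hx)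
      exact lt_of_le_of_ne h1 (fun hc => hxt (w.injective hc.symm))
    · intro hmin
      by_contra hne
      have h1 : w t < w (Θ w) := hmin (Θ w) (hΘmem w) hne
      have h2 : w (Θ w) ≤ w t := by
        rw [key]; exact Finset.min'_le _ _ (Finset.mem_image_of_mem w htV)
      exact hne (w.injective (le_antisymm h2 h1.le))
  have himgV : ∀ (u v : Fin N), u ∈ V → v ∈ V → V.image (Equiv.swap u v) = V := by
    intro u v hu hv
    apply Finset.eq_of_subset_of_card_le
    · intro y hy
      obtain ⟨x, hx, rfl⟩ := Finset.mem_image.mp hy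
      rcases eq_or_ne x u with rfl | hxu
      · rwa [Equiv.swap_apply_left]
      rcases eq_or_ne x v with rfl | hxv
      · rwa [Equiv.swap_apply_right]
      · rwa [Equiv.swap_apply_of_ne_of_ne hxu hxv]
    · rw [Finset.card_image_of_injective _ (Equiv.swap u v).injective]
  have hΘswap : ∀ (w : Equiv.Perm (Fin N)) (u v : Fin N), u ∈ V → v ∈ V →
      Θ (w * Equiv.swap u v) = Equiv.swap u v (Θ w) := by
    intro w u v hu hv
    have himg : V.image ⇑(w * Equiv.swap u v) = V.image w := by
      rw [show ⇑(w * Equiv.swap u v) = ⇑w ∘ ⇑(Equiv.swap u v) from rfl,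
        ← Finset.image_image, himgV u v hu hv]
    have hmin : (V.image ⇑(w * Equiv.swap u v)).min' (hVne.image _)
        = (V.image ⇑w).min' (hVne.image _) := min'_congr' _ _ _ _ himg
    rw [hΘdef]
    simp only [hmin]
    have hsy : ∀ x, (w * Equiv.swap u v).symm x = Equiv.swap u v (w.symm x) := by
      intro x
      rw [Equiv.Perm.mul_def, Equiv.symm_trans_apply, Equiv.symm_swap]
    exact hsy _
  have hsum : (univ.filter fun w => P w).card
      = ∑ m ∈ V, ((univ.filter fun w => P w).filter fun w => Θ w = m).card :=
    Finset.card_eq_sum_card_fiberwise (fun w _ => hΘmem w)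
  have hfib : ∀ m ∈ V, ((univ.filter fun w => P w).filter fun w => Θ w = m).card
      = ((univ.filter fun w => P w).filter fun w => Θ w = t).card := by
    intro m hm
    apply Finset.card_bij' (fun w _ => w * Equiv.swap m t) (fun w _ => w * Equiv.swap m t)
    · intro w hw
      simp only [Finset.mem_filter, Finset.mem_univ, true_and] at hw ⊢
      exact ⟨hP m t hm htV w hw.1, by rw [hΘswap w m t hm htV, hw.2, Equiv.swap_apply_left]⟩
    · intro w hw
      simp only [Finset.mem_filter, Finset.mem_univ, true_and] at hw ⊢
      exact ⟨hP m t hm htV w hw.1, by rw [hΘswap w m t hm htV, hw.2, Equiv.swap_apply_right]⟩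
    · intro w hw
      rw [mul_assoc, Equiv.swap_mul_self, mul_one]
    · intro w hw
      rw [mul_assoc, Equiv.swap_mul_self, mul_one]
  have hfilt : ((univ.filter fun w => P w).filter fun w => Θ w = t)
      = (univ.filter fun w => P w ∧ ∀ x ∈ V, x ≠ t → w t < w x) := by
    rw [Finset.filter_filter]
    apply Finset.filter_congr
    intro w _
    rw [hchar w]
  rw [hsum, Finset.sum_congr rfl hfib, Finset.sum_const, smul_eq_mul, hfilt, mul_comm]

end Swap
open Finset

lemma succAbove_le_iff {m : ℕ} (p : Fin (m+1)) (j : Fin m) (d : ℕ)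
    (hp : (p:ℕ) ≤ d) (hd : 1 ≤ d) :
    ((p.succAbove j : Fin (m+1)) : ℕ) ≤ d ↔ (j : ℕ) ≤ d - 1 := by
  rcases lt_or_ge (Fin.castSucc j) p with h | h
  · rw [Fin.succAbove_of_castSucc_lt _ _ h]
    have hv : (j:ℕ) < (p:ℕ) := by
      have := Fin.lt_def.mp h; simpa using this
    simp only [Fin.coe_castSucc]
    omega
  · rw [Fin.succAbove_of_le_castSucc _ _ h]
    have hv : (p:ℕ) ≤ (j:ℕ) := by
      have := Fin.le_def.mp h; simpa using this
    simp only [Fin.val_succ]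
    omega

lemma deadline_count : ∀ (m : ℕ) (D : Fin m → ℕ), Monotone D → (∀ i : Fin m, (i:ℕ) ≤ D i) →
    (∀ i, D i < m) →
    (univ.filter fun σ : Equiv.Perm (Fin m) => ∀ i, (σ i : ℕ) ≤ D i).card
      = ∏ i : Fin m, (D i + 1 - i) := by
  intro m
  induction m with
  | zero =>
    intro D _ _ _
    rw [Finset.filter_true_of_mem (fun σ _ => fun i => i.elim0), Finset.card_univ]
    simp [Fintype.card_perm]
  | succ m ih =>
    intro D hmono hlow hupp
    classical
    rw [Finset.card_eq_sum_card_fiberwise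
      (f := fun σ : Equiv.Perm (Fin (m+1)) => σ 0) (t := univ) (fun σ _ => mem_univ _)]
    set Csub := (univ.filter fun e : Equiv.Perm (Fin m) =>
      ∀ i : Fin m, (e i : ℕ) ≤ D i.succ - 1).card with hCsub
    have hfib : ∀ p : Fin (m+1),
        (((univ.filter fun σ : Equiv.Perm (Fin (m+1)) => ∀ i, (σ i : ℕ) ≤ D i)).filter
          fun σ => σ 0 = p).card = if (p:ℕ) ≤ D 0 then Csub else 0 := by
      intro p
      rcases le_or_gt ((p:ℕ)) (D 0) with hp | hp
      · rw [if_pos hp, hCsub]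
        set F : Equiv.Perm (Fin (m+1)) → Equiv.Perm (Fin m) := fun σ =>
          Equiv.removeNone (((finSuccEquiv' (0:Fin (m+1))).symm.trans σ).trans
            (finSuccEquiv' p)) with hF
        set G : Equiv.Perm (Fin m) → Equiv.Perm (Fin (m+1)) := fun e =>
          ((finSuccEquiv' (0:Fin (m+1))).trans e.optionCongr).trans (finSuccEquiv' p).symm
          with hG
        have hG0 : ∀ e, G e 0 = p := by
          intro e
          simp only [hG, Equiv.trans_apply, finSuccEquiv'_at, Equiv.optionCongr_apply,
            Option.map_none, finSuccEquiv'_symm_none]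
        have hGs : ∀ e (j : Fin m), G e (Fin.succ j) = p.succAbove (e j) := by
          intro e j
          have h1 : (finSuccEquiv' (0:Fin (m+1))) (Fin.succ j) = some j := by
            rw [← Fin.succAbove_zero, finSuccEquiv'_succAbove]
          simp only [hG, Equiv.trans_apply, h1, Equiv.optionCongr_apply, Option.map_some,
            finSuccEquiv'_symm_some]
        have hFs : ∀ σ : Equiv.Perm (Fin (m+1)), σ 0 = p →
            ∀ j : Fin m, σ (Fin.succ j) = p.succAbove (F σ j) := by
          intro σ h0 j
          have hne : σ (Fin.succ j) ≠ p := by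
            rw [← h0]; exact fun hc => (Fin.succ_ne_zero j) (σ.injective hc)
          obtain ⟨y, hy⟩ := Fin.exists_succAbove_eq hne
          have hE : (((finSuccEquiv' (0:Fin (m+1))).symm.trans σ).trans (finSuccEquiv' p))
              (some j) = some y := by
            simp only [Equiv.trans_apply, finSuccEquiv'_symm_some, Fin.succAbove_zero]
            rw [← hy, finSuccEquiv'_succAbove]
          have h2 := Equiv.removeNone_aux_some
            (((finSuccEquiv' (0:Fin (m+1))).symm.trans σ).trans (finSuccEquiv' p))
            (x := j) ⟨y, hE⟩
          rw [hE] at h2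
          have h3 : F σ j = y := by
            have : some (F σ j) = some y := h2
            exact Option.some_injective _ this
          rw [h3, hy]
        apply Finset.card_bij' (fun σ _ => F σ) (fun e _ => G e)
        · intro σ hσ
          simp only [Finset.mem_filter, Finset.mem_univ, true_and] at hσ ⊢
          intro j
          have hc := hσ.1 (Fin.succ j)
          rw [hFs σ hσ.2 j] at hc
          have hd1 : 1 ≤ D (Fin.succ j) := by
            have := hlow (Fin.succ j); simp [Fin.val_succ] at this; omega
          exact (succAbove_le_iff p (F σ j) (D (Fin.succ j))
            (hp.trans (hmono (Fin.zero_le _))) hd1).mp hc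
        · intro e he
          simp only [Finset.mem_filter, Finset.mem_univ, true_and] at he ⊢
          constructor
          · intro i
            induction i using Fin.cases with
            | zero => rw [hG0]; exact hp
            | succ j =>
              rw [hGs]
              have hd1 : 1 ≤ D (Fin.succ j) := by
                have := hlow (Fin.succ j); simp [Fin.val_succ] at this; omega
              exact (succAbove_le_iff p (e j) (D (Fin.succ j))
                (hp.trans (hmono (Fin.zero_le _))) hd1).mpr (he j)
          · exact hG0 e
        · intro σ hσ
          simp only [Finset.mem_filter, Finset.mem_univ, true_and] at hσ
          ext x
          induction x using Fin.cases with
          | zero => rw [hG0, hσ.2]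
          | succ j => rw [hGs, ← hFs σ hσ.2 j]
        · intro e he
          have hq : F (G e) = e := by
            apply Equiv.ext
            intro j
            apply Fin.succAbove_right_injective (p := p)
            rw [← hFs (G e) (hG0 e) j, hGs]
          exact hq
      · rw [if_neg (by omega), Finset.card_eq_zero]
        ext σ
        simp only [Finset.mem_filter, Finset.mem_univ, true_and, Finset.notMem_empty,
          iff_false, not_and]
        intro hc hσ0
        have := hc 0
        rw [hσ0] at this
        omega
    rw [Finset.sum_congr rfl (fun p _ => hfib p), ← Finset.sum_filter, Finset.sum_const,
      smul_eq_mul]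
    have hfc : univ.filter (fun p : Fin (m+1) => (p:ℕ) ≤ D 0) = Finset.Iic (⟨D 0, hupp 0⟩ : Fin (m+1)) := by
      ext q; simp [Fin.le_def]
    rw [hfc, Fin.card_Iic]
    have hsub := ih (fun i => D i.succ - 1)
      (fun i j hij => by
        have := hmono (Fin.succ_le_succ_iff.mpr hij)
        dsimp only
        omega)
      (fun (i : Fin m) => by
        have := hlow i.succ
        simp only [Fin.val_succ] at this
        omega)
      (fun (i : Fin m) => by
        have h1 := hupp i.succ
        have h2 := hlow i.succ
        simp only [Fin.val_succ] at h2
        omega)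
    have hCs2 : Csub = ∏ i : Fin m, (D i.succ - 1 + 1 - (i:ℕ)) := hCsub.trans hsub
    rw [hCs2, Fin.prod_univ_succ]
    have hfac : ∀ i : Fin m, (D i.succ + 1 - ((i.succ : Fin (m+1)) : ℕ))
        = (D i.succ - 1 + 1 - (i:ℕ)) := by
      intro i
      have := hlow i.succ; simp only [Fin.val_succ] at this ⊢; omega
    rw [Finset.prod_congr rfl (fun i _ => hfac i)]
    simp
attribute [local instance 10] Classical.propDecidable


section Machine
variable {n : ℕ}

def pstate (n : ℕ) (τ : Fin n → Fin (2*n)) : ℕ → Finset (Fin (2*n)) × Finset (Fin (2*n))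
  | 0 => (∅, ∅)
  | k + 1 =>
    let p := pstate n τ k
    let u := (Finset.univ : Finset (Fin (2*n))) \ (p.1 ∪ p.2)
    if h : k < n then
      if hb : τ ⟨k, h⟩ ∈ u ∧ (u.erase (τ ⟨k, h⟩)).Nonempty then
        (insert ((u.erase (τ ⟨k, h⟩)).min' hb.2) p.1, insert (τ ⟨k, h⟩) p.2)
      else p
    else p

def uset (n : ℕ) (τ : Fin n → Fin (2*n)) (k : ℕ) : Finset (Fin (2*n)) :=
  Finset.univ \ ((pstate n τ k).1 ∪ (pstate n τ k).2)

def cuset {N : ℕ} (w : Equiv.Perm (Fin N)) (k : ℕ) : Finset (Fin N) :=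
  Finset.univ \ ((crossout w k).1 ∪ (crossout w k).2)

def Adm (n : ℕ) (τ : Fin n → Fin (2*n)) : Prop := ∀ k : Fin n, τ k ∈ uset n τ (k : ℕ)

def CondUpTo (n : ℕ) (τ : Fin n → Fin (2*n)) (j : ℕ) (w : Equiv.Perm (Fin (2*n))) : Prop :=
  ∀ k : Fin n, (k : ℕ) < j → ∀ x ∈ uset n τ (k : ℕ), x ≠ τ k → w (τ k) < w x

lemma pstate_succ_of {τ : Fin n → Fin (2*n)} {k : ℕ} (h : k < n)
    (hin : τ ⟨k, h⟩ ∈ uset n τ k)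
    (hne : ((uset n τ k).erase (τ ⟨k, h⟩)).Nonempty) :
    pstate n τ (k+1) = (insert (((uset n τ k).erase (τ ⟨k, h⟩)).min' hne) (pstate n τ k).1,
      insert (τ ⟨k, h⟩) (pstate n τ k).2) := by
  rw [pstate]
  rw [dif_pos h, dif_pos ⟨hin, hne⟩]
  rfl

lemma crossout_succ_of {N : ℕ} (w : Equiv.Perm (Fin N)) (k : ℕ)
    (hu : (cuset w k).Nonempty)
    (ha : ((cuset w k).erase
      (w.symm (((cuset w k).image w).min' (hu.image _)))).Nonempty) :
    crossout w (k+1) =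
      (insert (((cuset w k).erase
          (w.symm (((cuset w k).image w).min' (hu.image _)))).min' ha) (crossout w k).1,
       insert (w.symm (((cuset w k).image w).min' (hu.image _))) (crossout w k).2) := by
  unfold cuset at hu ha ⊢
  rw [crossout]
  rw [dif_pos hu]
  dsimp only
  rw [dif_pos ha]

lemma pstate_step_sub (τ : Fin n → Fin (2*n)) (k : ℕ) :
    (pstate n τ k).1 ⊆ (pstate n τ (k+1)).1 ∧ (pstate n τ k).2 ⊆ (pstate n τ (k+1)).2 := by
  rw [pstate]
  split_ifs with h hb
  · exact ⟨subset_insert _ _, subset_insert _ _⟩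
  · exact ⟨Finset.Subset.rfl, Finset.Subset.rfl⟩
  · exact ⟨Finset.Subset.rfl, Finset.Subset.rfl⟩

lemma pstate_mono (τ : Fin n → Fin (2*n)) {j k : ℕ} (hjk : j ≤ k) :
    (pstate n τ j).1 ⊆ (pstate n τ k).1 ∧ (pstate n τ j).2 ⊆ (pstate n τ k).2 := by
  induction k, hjk using Nat.le_induction with
  | base => exact ⟨Finset.Subset.rfl, Finset.Subset.rfl⟩
  | succ k hk ih =>
    exact ⟨ih.1.trans (pstate_step_sub τ k).1, ih.2.trans (pstate_step_sub τ k).2⟩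

lemma uset_anti (τ : Fin n → Fin (2*n)) {j k : ℕ} (hjk : j ≤ k) :
    uset n τ k ⊆ uset n τ j := by
  apply Finset.sdiff_subset_sdiff Finset.Subset.rfl
  exact Finset.union_subset_union (pstate_mono τ hjk).1 (pstate_mono τ hjk).2

lemma adm_inv {τ : Fin n → Fin (2*n)} (hA : Adm n τ) :
    ∀ k, k ≤ n → (pstate n τ k).1.card = k
      ∧ (pstate n τ k).2 = (univ.filter fun j : Fin n => (j:ℕ) < k).image τ
      ∧ (pstate n τ k).2.card = k ∧ Disjoint (pstate n τ k).1 (pstate n τ k).2 := by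
  intro k
  induction k with
  | zero =>
    intro _
    refine ⟨by simp [pstate], by simp [pstate], by simp [pstate], by simp [pstate]⟩
  | succ k IH =>
    intro hk1
    have hk : k < n := hk1
    obtain ⟨hc1, h2img, hc2, hdisj⟩ := IH (le_of_lt hk)
    have hucard : (uset n τ k).card = 2*n - 2*k := by
      rw [uset, card_sdiff_of_subset (subset_univ _), card_union_of_disjoint hdisj, hc1, hc2,
        card_univ, Fintype.card_fin]
      omega
    have hb : τ ⟨k, hk⟩ ∈ uset n τ k := hA ⟨k, hk⟩
    have hane : ((uset n τ k).erase (τ ⟨k, hk⟩)).Nonempty := by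
      rw [← Finset.card_pos, Finset.card_erase_of_mem hb, hucard]; omega
    rw [pstate_succ_of hk hb hane]
    set a := ((uset n τ k).erase (τ ⟨k, hk⟩)).min' hane with ha
    have hamem := Finset.min'_mem _ hane
    rw [← ha, Finset.mem_erase] at hamem
    have haU : a ∉ (pstate n τ k).1 ∪ (pstate n τ k).2 :=
      (Finset.mem_sdiff.mp hamem.2).2
    have hbU : τ ⟨k, hk⟩ ∉ (pstate n τ k).1 ∪ (pstate n τ k).2 :=
      (Finset.mem_sdiff.mp hb).2
    have ha1 : a ∉ (pstate n τ k).1 := fun hc => haU (Finset.mem_union_left _ hc)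
    have ha2 : a ∉ (pstate n τ k).2 := fun hc => haU (Finset.mem_union_right _ hc)
    have hb1 : τ ⟨k, hk⟩ ∉ (pstate n τ k).1 := fun hc => hbU (Finset.mem_union_left _ hc)
    have hb2 : τ ⟨k, hk⟩ ∉ (pstate n τ k).2 := fun hc => hbU (Finset.mem_union_right _ hc)
    refine ⟨?_, ?_, ?_, ?_⟩
    · simp only [Finset.card_insert_of_notMem ha1, hc1]
    · have hfilt : (univ.filter fun j : Fin n => (j:ℕ) < k+1)
          = insert ⟨k, hk⟩ (univ.filter fun j : Fin n => (j:ℕ) < k) := by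
        ext j
        simp only [Finset.mem_filter, Finset.mem_univ, true_and, Finset.mem_insert,
          Fin.ext_iff]
        omega
      rw [hfilt, Finset.image_insert, h2img]
    · simp only [Finset.card_insert_of_notMem hb2, hc2]
    · rw [Finset.disjoint_left]
      intro x hx1 hx2
      rcases Finset.mem_insert.mp hx1 with rfl | hx1'
      · rcases Finset.mem_insert.mp hx2 with h | h
        · exact hamem.1 h
        · exact ha2 h
      · rcases Finset.mem_insert.mp hx2 with rfl | h
        · exact hb1 hx1'
        · exact (Finset.disjoint_left.mp hdisj hx1') h

lemma adm_uset_card {τ : Fin n → Fin (2*n)} (hA : Adm n τ) {k : ℕ} (hk : k ≤ n) :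
    (uset n τ k).card = 2*n - 2*k := by
  obtain ⟨hc1, _, hc2, hdisj⟩ := adm_inv hA k hk
  rw [uset, card_sdiff_of_subset (subset_univ _), card_union_of_disjoint hdisj, hc1, hc2,
    card_univ, Fintype.card_fin]
  omega

lemma adm_tau_marked {τ : Fin n → Fin (2*n)} (hA : Adm n τ) {j : Fin n} {k : ℕ}
    (hjk : (j:ℕ) < k) (hk : k ≤ n) : τ j ∈ (pstate n τ k).2 := by
  obtain ⟨_, h2img, _, _⟩ := adm_inv hA k hk
  rw [h2img]
  exact Finset.mem_image_of_mem τ (by simp [hjk])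

lemma adm_tau_not_uset {τ : Fin n → Fin (2*n)} (hA : Adm n τ) {j : Fin n} {k : ℕ}
    (hjk : (j:ℕ) < k) (hk : k ≤ n) : τ j ∉ uset n τ k := by
  intro hc
  exact (Finset.mem_sdiff.mp hc).2 (Finset.mem_union_right _ (adm_tau_marked hA hjk hk))

lemma adm_inj {τ : Fin n → Fin (2*n)} (hA : Adm n τ) : Function.Injective τ := by
  intro i j hij
  by_contra hne
  wlog hlt : (i:ℕ) < (j:ℕ) generalizing i j
  · have hv : (i:ℕ) ≠ (j:ℕ) := fun hc => hne (Fin.ext hc)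
    exact this hij.symm (Ne.symm hne) (by omega)
  have h1 : τ i ∈ (pstate n τ (j:ℕ)).2 := adm_tau_marked hA hlt (le_of_lt j.isLt)
  have h2 := hA j
  rw [← hij] at h2
  exact (Finset.mem_sdiff.mp h2).2 (Finset.mem_union_right _ h1)

end Machine

section Machine2
variable {n : ℕ}

lemma crossout_card (w : Equiv.Perm (Fin (2*n))) :
    ∀ k, k ≤ n → (crossout w k).1.card = k ∧ (crossout w k).2.card = k
      ∧ ((crossout w k).1 ∪ (crossout w k).2).card = 2*k := by
  intro k
  induction k with
  | zero => exact fun _ => ⟨by simp [crossout], by simp [crossout], by simp [crossout]⟩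
  | succ k IH =>
    intro hk1
    have hk : k < n := hk1
    obtain ⟨hc1, hc2, hcU⟩ := IH (le_of_lt hk)
    have hucard : (cuset w k).card = 2*n - 2*k := by
      rw [cuset, card_sdiff_of_subset (subset_univ _), hcU, card_univ, Fintype.card_fin]
    have hu : (cuset w k).Nonempty := by
      rw [← Finset.card_pos, hucard]; omega
    set b := w.symm (((cuset w k).image w).min' (hu.image _)) with hbdef
    have hbmem : b ∈ cuset w k := by
      obtain ⟨x, hx, hxe⟩ := Finset.mem_image.mp (Finset.min'_mem _ (hu.image w))
      rw [hbdef, ← hxe, Equiv.symm_apply_apply]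
      exact hx
    have ha : ((cuset w k).erase b).Nonempty := by
      rw [← Finset.card_pos, Finset.card_erase_of_mem hbmem, hucard]; omega
    rw [crossout_succ_of w k hu ha]
    set a := ((cuset w k).erase b).min' ha with hadef
    have hamem := Finset.min'_mem _ ha
    rw [← hadef, Finset.mem_erase] at hamem
    have haU : a ∉ (crossout w k).1 ∪ (crossout w k).2 := (Finset.mem_sdiff.mp hamem.2).2
    have hbU : b ∉ (crossout w k).1 ∪ (crossout w k).2 := (Finset.mem_sdiff.mp hbmem).2
    refine ⟨?_, ?_, ?_⟩
    · rw [Finset.card_insert_of_notMem (fun hc => haU (Finset.mem_union_left _ hc)), hc1]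
    · rw [Finset.card_insert_of_notMem (fun hc => hbU (Finset.mem_union_right _ hc)), hc2]
    · have hset : insert a (crossout w k).1 ∪ insert b (crossout w k).2
          = insert a (insert b ((crossout w k).1 ∪ (crossout w k).2)) := by
        rw [Finset.insert_union, Finset.union_insert]
      rw [hset, Finset.card_insert_of_notMem, Finset.card_insert_of_notMem hbU, hcU]
      · omega
      · simp only [Finset.mem_insert]
        push_neg
        exact ⟨hamem.1, haU⟩

lemma cuset_card (w : Equiv.Perm (Fin (2*n))) {k : ℕ} (hk : k ≤ n) :
    (cuset w k).card = 2*n - 2*k := by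
  rw [cuset, card_sdiff_of_subset (subset_univ _), (crossout_card w k hk).2.2, card_univ,
    Fintype.card_fin]

lemma crossout_stab (w : Equiv.Perm (Fin (2*n))) {k : ℕ} (hk : n ≤ k) :
    crossout w k = crossout w n := by
  induction k, hk using Nat.le_induction with
  | base => rfl
  | succ k hk ih =>
    have hmarked : (crossout w k).1 ∪ (crossout w k).2 = univ := by
      rw [ih]
      apply Finset.eq_univ_of_card
      rw [(crossout_card w n le_rfl).2.2, Fintype.card_fin]
    rw [crossout, dif_neg, ih]
    rw [hmarked]
    simp

lemma markB_eq (w : Equiv.Perm (Fin (2*n))) : markB w = (crossout w n).2 := by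
  rw [markB, crossout_stab w (by omega)]

noncomputable def btau (n : ℕ) (w : Equiv.Perm (Fin (2*n))) : Fin n → Fin (2*n) :=
  fun k => w.symm (((cuset w (k:ℕ)).image w).min'
    (Finset.Nonempty.image (Finset.card_pos.mp (by
      rw [cuset_card w (le_of_lt k.isLt)]; omega)) w))

lemma btau_crossout (w : Equiv.Perm (Fin (2*n))) :
    ∀ k, k ≤ n → crossout w k = pstate n (btau n w) k := by
  intro k
  induction k with
  | zero => intro _; rfl
  | succ k IH =>
    intro hk1
    have hk : k < n := hk1
    have hps := IH (le_of_lt hk)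
    have huset : uset n (btau n w) k = cuset w k := by
      rw [uset, cuset, hps]
    have hucard : (cuset w k).card = 2*n - 2*k := cuset_card w (le_of_lt hk)
    have hu : (cuset w k).Nonempty := by rw [← Finset.card_pos, hucard]; omega
    set b := w.symm (((cuset w k).image w).min' (hu.image _)) with hbdef
    have hbv : btau n w ⟨k, hk⟩ = b := rfl
    have hbmem : b ∈ cuset w k := by
      obtain ⟨x, hx, hxe⟩ := Finset.mem_image.mp (Finset.min'_mem _ (hu.image w))
      rw [hbdef, ← hxe, Equiv.symm_apply_apply]
      exact hx
    have ha : ((cuset w k).erase b).Nonempty := by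
      rw [← Finset.card_pos, Finset.card_erase_of_mem hbmem, hucard]; omega
    rw [crossout_succ_of w k hu ha]
    rw [pstate_succ_of hk (by rw [huset, hbv]; exact hbmem)
      (by rw [huset, hbv]; exact ha)]
    rw [← hps]
    simp only [huset, hbv]
    rfl

lemma btau_adm (w : Equiv.Perm (Fin (2*n))) : Adm n (btau n w) := by
  intro k
  have huset : uset n (btau n w) (k:ℕ) = cuset w (k:ℕ) := by
    rw [uset, cuset, btau_crossout w (k:ℕ) (le_of_lt k.isLt)]
  rw [huset]
  have hu : (cuset w (k:ℕ)).Nonempty := by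
    rw [← Finset.card_pos, cuset_card w (le_of_lt k.isLt)]
    have := k.isLt; omega
  obtain ⟨x, hx, hxe⟩ := Finset.mem_image.mp (Finset.min'_mem _ (hu.image w))
  show w.symm _ ∈ cuset w (k:ℕ)
  rw [show ((cuset w (k:ℕ)).image w).min'
    (Finset.Nonempty.image (Finset.card_pos.mp (by
      rw [cuset_card w (le_of_lt k.isLt)]; omega)) w) = w x from hxe.symm,
    Equiv.symm_apply_apply]
  exact hx

lemma btau_cond (w : Equiv.Perm (Fin (2*n))) : CondUpTo n (btau n w) n w := by
  intro k hk x hx hxne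
  have huset : uset n (btau n w) (k:ℕ) = cuset w (k:ℕ) := by
    rw [uset, cuset, btau_crossout w (k:ℕ) (le_of_lt k.isLt)]
  rw [huset] at hx
  have happ : w (btau n w k) = ((cuset w (k:ℕ)).image w).min' _ :=
    w.apply_symm_apply _
  have hle : w (btau n w k) ≤ w x := by
    rw [happ]
    exact Finset.min'_le _ _ (Finset.mem_image_of_mem w hx)
  exact lt_of_le_of_ne hle (fun hc => hxne (w.injective hc.symm))

lemma cond_min_eq {τ : Fin n → Fin (2*n)} (hA : Adm n τ) {w : Equiv.Perm (Fin (2*n))}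
    (hC : CondUpTo n τ n w) (k : Fin n) (hne : ((uset n τ (k:ℕ)).image w).Nonempty) :
    ((uset n τ (k:ℕ)).image w).min' hne = w (τ k) := by
  apply le_antisymm
  · exact Finset.min'_le _ _ (Finset.mem_image_of_mem w (hA k))
  · apply Finset.le_min'
    rintro y hy
    obtain ⟨x, hx, rfl⟩ := Finset.mem_image.mp hy
    rcases eq_or_ne x (τ k) with rfl | hxne
    · exact le_rfl
    · exact (hC k k.isLt x hx hxne).le

lemma cond_crossout {τ : Fin n → Fin (2*n)} (hA : Adm n τ) {w : Equiv.Perm (Fin (2*n))}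
    (hC : CondUpTo n τ n w) : ∀ k, k ≤ n → crossout w k = pstate n τ k := by
  intro k
  induction k with
  | zero => intro _; rfl
  | succ k IH =>
    intro hk1
    have hk : k < n := hk1
    have hps := IH (le_of_lt hk)
    have huset : cuset w k = uset n τ k := by rw [uset, cuset, hps]
    have hucard : (cuset w k).card = 2*n - 2*k := by
      rw [huset]; exact adm_uset_card hA (le_of_lt hk)
    have hu : (cuset w k).Nonempty := by rw [← Finset.card_pos, hucard]; omega
    have hmin : ((cuset w k).image w).min' (hu.image _) = w (τ ⟨k, hk⟩) := by
      have h2 : ((uset n τ k).image w).Nonempty := by rw [← huset]; exact hu.image _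
      rw [min'_congr' _ _ (hu.image _) h2 (by rw [huset])]
      exact cond_min_eq hA hC ⟨k, hk⟩ h2
    set b := w.symm (((cuset w k).image w).min' (hu.image _)) with hbdef
    have hbv : b = τ ⟨k, hk⟩ := by rw [hbdef, hmin, Equiv.symm_apply_apply]
    have hbmem : b ∈ cuset w k := by rw [hbv, huset]; exact hA ⟨k, hk⟩
    have ha : ((cuset w k).erase b).Nonempty := by
      rw [← Finset.card_pos, Finset.card_erase_of_mem hbmem, hucard]; omega
    rw [crossout_succ_of w k hu ha]
    rw [pstate_succ_of hk (hA ⟨k, hk⟩) (by rw [← huset, ← hbv]; exact ha)]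
    rw [← hps]
    simp only [← huset, ← hbv]
    rfl

lemma cond_unique {τ : Fin n → Fin (2*n)} (hA : Adm n τ) {w : Equiv.Perm (Fin (2*n))}
    (hC : CondUpTo n τ n w) : τ = btau n w := by
  funext k
  have hse := cond_crossout hA hC (k:ℕ) (le_of_lt k.isLt)
  have huset : cuset w (k:ℕ) = uset n τ (k:ℕ) := by rw [uset, cuset, hse]
  have h2 : ((uset n τ (k:ℕ)).image w).Nonempty := Finset.Nonempty.image ⟨τ k, hA k⟩ w
  unfold btau
  rw [min'_congr' _ _ _ h2 (by rw [huset]), cond_min_eq hA hC k h2, Equiv.symm_apply_apply]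

end Machine2

section Machine3
variable {n : ℕ}

noncomputable def validT (n : ℕ) (B : Finset (Fin (2*n))) : Finset (Fin n → Fin (2*n)) :=
  univ.filter (fun τ => Adm n τ ∧ univ.image τ = B)

lemma filter_n_eq : (univ.filter fun j : Fin n => (j:ℕ) < n) = univ :=
  Finset.filter_true_of_mem (fun j _ => j.isLt)

lemma markB_image {τ : Fin n → Fin (2*n)} (hA : Adm n τ) {w : Equiv.Perm (Fin (2*n))}
    (hC : CondUpTo n τ n w) : markB w = univ.image τ := by
  rw [markB_eq, cond_crossout hA hC n le_rfl, (adm_inv hA n le_rfl).2.1, filter_n_eq]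

lemma decomp (B : Finset (Fin (2*n))) :
    (univ.filter fun w : Equiv.Perm (Fin (2*n)) => markB w = B)
      = (validT n B).biUnion (fun τ => univ.filter fun w => CondUpTo n τ n w) := by
  ext w
  simp only [mem_filter, mem_biUnion, mem_univ, true_and, validT]
  constructor
  · intro hmB
    exact ⟨btau n w, ⟨btau_adm w,
      by rw [← markB_image (btau_adm w) (btau_cond w), hmB]⟩, btau_cond w⟩
  · rintro ⟨τ, hτ, hcond⟩
    rw [markB_image hτ.1 hcond, hτ.2]

lemma decomp_card (B : Finset (Fin (2*n))) :
    (univ.filter fun w : Equiv.Perm (Fin (2*n)) => markB w = B).card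
      = ∑ τ ∈ validT n B, (univ.filter fun w => CondUpTo n τ n w).card := by
  rw [decomp B]
  apply Finset.card_biUnion
  intro τ1 h1 τ2 h2 hne
  simp only [validT, Finset.mem_coe, mem_filter, mem_univ, true_and] at h1 h2
  rw [Function.onFun, Finset.disjoint_left]
  intro w hw1 hw2
  simp only [mem_filter, mem_univ, true_and] at hw1 hw2
  exact hne ((cond_unique h1.1 hw1).trans (cond_unique h2.1 hw2).symm)

lemma cond_card {τ : Fin n → Fin (2*n)} (hA : Adm n τ) :
    (univ.filter fun w : Equiv.Perm (Fin (2*n)) => CondUpTo n τ n w).card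
        * ∏ i ∈ Finset.range n, (2*n - 2*i)
      = (2*n).factorial := by
  classical
  have key : ∀ j, j ≤ n → (univ.filter fun w : Equiv.Perm (Fin (2*n)) =>
      CondUpTo n τ j w).card * ∏ i ∈ Finset.range j, (2*n - 2*i) = (2*n).factorial := by
    intro j
    induction j with
    | zero =>
      intro _
      have htriv : ∀ w : Equiv.Perm (Fin (2*n)), CondUpTo n τ 0 w :=
        fun w k hk => absurd hk (Nat.not_lt_zero _)
      rw [Finset.filter_true_of_mem (fun w _ => htriv w)]
      simp [card_univ, Fintype.card_perm, Fintype.card_fin]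
    | succ j IHj =>
      intro hj1
      have hjn : j < n := hj1
      have hVcard : (uset n τ j).card = 2*n - 2*j := adm_uset_card hA (le_of_lt hjn)
      have hinv : ∀ (u v : Fin (2*n)), u ∈ uset n τ j → v ∈ uset n τ j →
          ∀ w, CondUpTo n τ j w → CondUpTo n τ j (w * Equiv.swap u v) := by
        intro u v hu hv w hw k hk x hx hxne
        have hτm : τ k ∉ uset n τ j := adm_tau_not_uset hA hk (le_of_lt hjn)
        have hsub : uset n τ j ⊆ uset n τ (k:ℕ) := uset_anti τ (le_of_lt hk)
        have hτu : τ k ≠ u := fun hc => hτm (hc ▸ hu)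
        have hτv : τ k ≠ v := fun hc => hτm (hc ▸ hv)
        have hfix : Equiv.swap u v (τ k) = τ k := Equiv.swap_apply_of_ne_of_ne hτu hτv
        have hsx : Equiv.swap u v x ∈ uset n τ (k:ℕ) := by
          rcases eq_or_ne x u with rfl | hxu
          · rw [Equiv.swap_apply_left]; exact hsub hv
          rcases eq_or_ne x v with rfl | hxv
          · rw [Equiv.swap_apply_right]; exact hsub hu
          · rw [Equiv.swap_apply_of_ne_of_ne hxu hxv]; exact hx
        have hsxne : Equiv.swap u v x ≠ τ k := by
          rcases eq_or_ne x u with rfl | hxu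
          · rw [Equiv.swap_apply_left]; exact fun hc => hτm (hc ▸ hv)
          rcases eq_or_ne x v with rfl | hxv
          · rw [Equiv.swap_apply_right]; exact fun hc => hτm (hc ▸ hu)
          · rw [Equiv.swap_apply_of_ne_of_ne hxu hxv]; exact hxne
        have := hw k hk _ hsx hsxne
        simpa [Equiv.Perm.mul_apply, hfix] using this
      have hsw := swap_count (uset n τ j) (τ ⟨j, hjn⟩) (hA ⟨j, hjn⟩) (CondUpTo n τ j) hinv
      have hiff : ∀ w : Equiv.Perm (Fin (2*n)), CondUpTo n τ (j+1) w ↔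
          (CondUpTo n τ j w ∧ ∀ x ∈ uset n τ j, x ≠ τ ⟨j, hjn⟩ → w (τ ⟨j, hjn⟩) < w x) := by
        intro w
        constructor
        · intro h
          refine ⟨fun k hk => h k (Nat.lt_succ_of_lt hk),
            fun x hx hxne => h ⟨j, hjn⟩ (Nat.lt_succ_self j) x hx hxne⟩
        · rintro ⟨h1, h2⟩ k hk x hx hxne
          rcases Nat.lt_or_ge (k:ℕ) j with h | h
          · exact h1 k h x hx hxne
          · have hkj : k = ⟨j, hjn⟩ := Fin.ext (by show (k:ℕ) = j; omega)
            subst hkj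
            exact h2 x hx hxne
      have hfe : (univ.filter fun w : Equiv.Perm (Fin (2*n)) => CondUpTo n τ (j+1) w)
          = (univ.filter fun w => CondUpTo n τ j w ∧
              ∀ x ∈ uset n τ j, x ≠ τ ⟨j, hjn⟩ → w (τ ⟨j, hjn⟩) < w x) :=
        Finset.filter_congr (fun w _ => hiff w)
      rw [Finset.prod_range_succ, hfe, ← mul_assoc, mul_comm
        ((univ.filter fun w => CondUpTo n τ j w ∧ ∀ x ∈ uset n τ j, x ≠ τ ⟨j, hjn⟩ →
          w (τ ⟨j, hjn⟩) < w x).card) (∏ i ∈ Finset.range j, (2*n-2*i))]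
      rw [mul_assoc, ← hVcard, hsw, mul_comm]
      exact IHj (le_of_lt hjn)
  exact key n le_rfl

end Machine3

section Dead
variable {n : ℕ} {B : Finset (Fin (2*n))}

lemma orderEmb_image_univ {α : Type*} [LinearOrder α] [DecidableEq α] (s : Finset α) {m : ℕ}
    (h : s.card = m) : Finset.univ.image (s.orderEmbOfFin h) = s := by
  ext x
  simp only [mem_image, mem_univ, true_and]
  constructor
  · rintro ⟨j, rfl⟩; exact Finset.orderEmbOfFin_mem s h j
  · intro hx
    have : x ∈ Set.range (s.orderEmbOfFin h) := by
      rw [Finset.range_orderEmbOfFin]; exact_mod_cast hx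
    obtain ⟨j, hj⟩ := this
    exact ⟨j, hj⟩

lemma bE_lt_cE_iff (hB : B.card = n) (hC : (Bᶜ).card = n) (i k : Fin n) :
    B.orderEmbOfFin hB i < (Bᶜ).orderEmbOfFin hC k
      ↔ ((Bᶜ).filter (· < B.orderEmbOfFin hB i)).card ≤ (k:ℕ) := by
  have hne : (Bᶜ).orderEmbOfFin hC k ≠ B.orderEmbOfFin hB i := by
    intro hc
    have h1 := Finset.orderEmbOfFin_mem (Bᶜ) hC k
    have h2 := Finset.orderEmbOfFin_mem B hB i
    rw [hc] at h1
    exact (Finset.mem_compl.mp h1) h2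
  constructor
  · intro h
    by_contra hcon
    push_neg at hcon
    have := (orderEmbOfFin_lt_iff (Bᶜ) hC k (B.orderEmbOfFin hB i)).mpr hcon
    exact absurd (this.trans h) (lt_irrefl _)
  · intro h
    rcases lt_or_ge (B.orderEmbOfFin hB i) ((Bᶜ).orderEmbOfFin hC k) with h' | h'
    · exact h'
    · have hlt : (Bᶜ).orderEmbOfFin hC k < B.orderEmbOfFin hB i := lt_of_le_of_ne h' hne
      have := (orderEmbOfFin_lt_iff (Bᶜ) hC k (B.orderEmbOfFin hB i)).mp hlt
      omega

lemma adm_dead (hB : B.card = n) (hC : (Bᶜ).card = n) {τ : Fin n → Fin (2*n)}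
    (himg : Finset.univ.image τ = B) (hA : Adm n τ) :
    ∀ (i k : Fin n), B.orderEmbOfFin hB i < (Bᶜ).orderEmbOfFin hC k →
      ∃ j : Fin n, j ≤ k ∧ τ j = B.orderEmbOfFin hB i := by
  classical
  have hmemB : ∀ j : Fin n, τ j ∈ B := fun j => by
    rw [← himg]; exact Finset.mem_image_of_mem τ (mem_univ j)
  have key : ∀ k, k ≤ n →
      ((pstate n τ k).1
          = (univ.filter fun j : Fin n => (j:ℕ) < k).image ((Bᶜ).orderEmbOfFin hC)
        ∧ ∀ m : Fin n, (m:ℕ) < k →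
            ∀ i : Fin n, B.orderEmbOfFin hB i < (Bᶜ).orderEmbOfFin hC m →
              ∃ j : Fin n, j ≤ m ∧ τ j = B.orderEmbOfFin hB i) := by
    intro k
    induction k with
    | zero =>
      intro _
      exact ⟨by simp [pstate], fun m hm => absurd hm (Nat.not_lt_zero _)⟩
    | succ k IH =>
      intro hk1
      have hk : k < n := hk1
      obtain ⟨hA1, hDead⟩ := IH (le_of_lt hk)
      obtain ⟨hc1, h2img, hc2, hdisj⟩ := adm_inv hA k (le_of_lt hk)
      have hb : τ ⟨k, hk⟩ ∈ uset n τ k := hA ⟨k, hk⟩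
      have hane : ((uset n τ k).erase (τ ⟨k, hk⟩)).Nonempty := by
        rw [← Finset.card_pos, Finset.card_erase_of_mem hb, adm_uset_card hA (le_of_lt hk)]
        omega
      have hstep := pstate_succ_of hk hb hane
      set a := ((uset n τ k).erase (τ ⟨k, hk⟩)).min' hane with hadef
      have hamem : a ∈ (uset n τ k).erase (τ ⟨k, hk⟩) := Finset.min'_mem _ hane
      have hamin : ∀ x ∈ (uset n τ k).erase (τ ⟨k, hk⟩), a ≤ x :=
        fun x hx => Finset.min'_le _ _ hx
      rw [Finset.mem_erase] at hamem
      have haP : a ∈ (pstate n τ (k+1)).1 := by rw [hstep]; exact Finset.mem_insert_self _ _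
      have haB : a ∉ B := by
        intro hc
        obtain ⟨j, hj⟩ : ∃ j, τ j = a := by
          rw [← himg] at hc
          obtain ⟨j, _, hj⟩ := Finset.mem_image.mp hc
          exact ⟨j, hj⟩
        rcases Nat.lt_trichotomy (j:ℕ) k with h | h | h
        · have hmk := adm_tau_marked hA h (le_of_lt hk)
          rw [hj] at hmk
          exact (Finset.mem_sdiff.mp hamem.2).2 (Finset.mem_union_right _ hmk)
        · exact hamem.1 (by rw [← hj]; congr 1; exact Fin.ext h)
        · have hj2 := hA j
          have hsub := (pstate_mono τ (show k+1 ≤ (j:ℕ) by omega)).1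
          have hmem2 : τ j ∈ (pstate n τ (j:ℕ)).1 := by rw [hj]; exact hsub haP
          exact (Finset.mem_sdiff.mp hj2).2 (Finset.mem_union_left _ hmem2)
      have haC : a ∈ Bᶜ := Finset.mem_compl.mpr haB
      obtain ⟨m, hm⟩ : ∃ m, (Bᶜ).orderEmbOfFin hC m = a := by
        have : a ∈ Set.range ((Bᶜ).orderEmbOfFin hC) := by
          rw [Finset.range_orderEmbOfFin]; exact_mod_cast haC
        exact this
      have hmk : k ≤ (m:ℕ) := by
        by_contra hmk
        push_neg at hmk
        have : a ∈ (pstate n τ k).1 := by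
          rw [hA1]
          exact Finset.mem_image.mpr ⟨m, by simp [hmk], hm⟩
        exact (Finset.mem_sdiff.mp hamem.2).2 (Finset.mem_union_left _ this)
      have hcEk : (Bᶜ).orderEmbOfFin hC ⟨k, hk⟩ ∈ (uset n τ k).erase (τ ⟨k, hk⟩) := by
        rw [Finset.mem_erase]
        constructor
        · intro hc
          have h1 := Finset.orderEmbOfFin_mem (Bᶜ) hC ⟨k, hk⟩
          rw [hc] at h1
          exact (Finset.mem_compl.mp h1) (hmemB ⟨k, hk⟩)
        · rw [uset, Finset.mem_sdiff]
          refine ⟨mem_univ _, ?_⟩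
          intro hc
          rcases Finset.mem_union.mp hc with h | h
          · rw [hA1] at h
            obtain ⟨m', hm', hme⟩ := Finset.mem_image.mp h
            simp only [Finset.mem_filter, Finset.mem_univ, true_and] at hm'
            have hmeq := ((Bᶜ).orderEmbOfFin hC).injective hme
            have hval : (m' : ℕ) = k := by rw [hmeq]
            omega
          · rw [h2img] at h
            obtain ⟨j, _, hj⟩ := Finset.mem_image.mp h
            have h1 := Finset.orderEmbOfFin_mem (Bᶜ) hC ⟨k, hk⟩
            rw [← hj] at h1
            exact (Finset.mem_compl.mp h1) (hmemB j)
      have hak : a = (Bᶜ).orderEmbOfFin hC ⟨k, hk⟩ := by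
        have h1 : a ≤ (Bᶜ).orderEmbOfFin hC ⟨k, hk⟩ := hamin _ hcEk
        have h2 : (Bᶜ).orderEmbOfFin hC ⟨k, hk⟩ ≤ (Bᶜ).orderEmbOfFin hC m := by
          apply ((Bᶜ).orderEmbOfFin hC).monotone
          exact hmk
        rw [hm] at h2
        exact le_antisymm h1 h2
      constructor
      · rw [hstep]
        have hfilt : (univ.filter fun j : Fin n => (j:ℕ) < k+1)
            = insert ⟨k, hk⟩ (univ.filter fun j : Fin n => (j:ℕ) < k) := by
          ext j
          simp only [Finset.mem_filter, Finset.mem_univ, true_and, Finset.mem_insert,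
            Fin.ext_iff]
          omega
        show insert a (pstate n τ k).1 = _
        rw [hfilt, Finset.image_insert, hA1, hak]
      · intro m' hm' i hi
        rcases Nat.lt_or_ge (m':ℕ) k with h | h
        · exact hDead m' h i hi
        · have hm'k : m' = ⟨k, hk⟩ := Fin.ext (by show (m':ℕ) = k; omega)
          subst hm'k
          set x := B.orderEmbOfFin hB i with hxdef
          have hxB : x ∈ B := Finset.orderEmbOfFin_mem B hB i
          by_cases hxu : x ∈ (uset n τ k).erase (τ ⟨k, hk⟩)
          · have h1 := hamin x hxu
            rw [hak] at h1
            exact absurd hi (not_lt.mpr h1)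
          · rw [Finset.mem_erase] at hxu
            push_neg at hxu
            by_cases hxt : x = τ ⟨k, hk⟩
            · exact ⟨⟨k, hk⟩, le_rfl, hxt.symm⟩
            · have hxm := hxu hxt
              have : x ∈ (pstate n τ k).1 ∪ (pstate n τ k).2 := by
                by_contra hc
                exact hxm (Finset.mem_sdiff.mpr ⟨mem_univ _, hc⟩)
              rcases Finset.mem_union.mp this with h' | h'
              · rw [hA1] at h'
                obtain ⟨m'', _, hme⟩ := Finset.mem_image.mp h'
                have h1 := Finset.orderEmbOfFin_mem (Bᶜ) hC m''
                rw [hme] at h1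
                exact absurd hxB (Finset.mem_compl.mp h1)
              · rw [h2img] at h'
                obtain ⟨j, hj1, hj2⟩ := Finset.mem_image.mp h'
                simp only [Finset.mem_filter, Finset.mem_univ, true_and] at hj1
                exact ⟨j, by rw [Fin.le_def]; show (j:ℕ) ≤ k; omega, hj2⟩
  intro i k hik
  exact (key n le_rfl).2 k k.isLt i hik

end Dead

section Dead2
variable {n : ℕ} {B : Finset (Fin (2*n))}

lemma card_filter_val_lt (n k : ℕ) (hk : k ≤ n) :
    (univ.filter fun j : Fin n => (j:ℕ) < k).card = k := by
  have himg : (univ.filter fun j : Fin n => (j:ℕ) < k).image Fin.val = Finset.range k := by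
    ext x
    simp only [Finset.mem_image, Finset.mem_filter, Finset.mem_univ, true_and,
      Finset.mem_range]
    constructor
    · rintro ⟨j, hj, rfl⟩; exact hj
    · intro hx; exact ⟨⟨x, lt_of_lt_of_le hx hk⟩, hx, rfl⟩
  calc (univ.filter fun j : Fin n => (j:ℕ) < k).card
      = ((univ.filter fun j : Fin n => (j:ℕ) < k).image Fin.val).card :=
        (Finset.card_image_of_injective _ Fin.val_injective).symm
    _ = (Finset.range k).card := by rw [himg]
    _ = k := Finset.card_range k

lemma dead_adm (hB : B.card = n) (hC : (Bᶜ).card = n) {τ : Fin n → Fin (2*n)}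
    (hinj : Function.Injective τ) (himg : Finset.univ.image τ = B)
    (hD : ∀ (i k : Fin n), B.orderEmbOfFin hB i < (Bᶜ).orderEmbOfFin hC k →
      ∃ j : Fin n, j ≤ k ∧ τ j = B.orderEmbOfFin hB i) : Adm n τ := by
  classical
  have hmemB : ∀ j : Fin n, τ j ∈ B := fun j => by
    rw [← himg]; exact Finset.mem_image_of_mem τ (mem_univ j)
  have hfree : ∀ (k : ℕ), k ≤ n →
      (pstate n τ k).1 = (univ.filter fun j : Fin n => (j:ℕ) < k).image ((Bᶜ).orderEmbOfFin hC) →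
      (pstate n τ k).2 = (univ.filter fun j : Fin n => (j:ℕ) < k).image τ →
      ∀ m : Fin n, k ≤ (m:ℕ) → τ m ∈ uset n τ k := by
    intro k hkn hP1 hP2 m hkm
    rw [uset, Finset.mem_sdiff]
    refine ⟨mem_univ _, ?_⟩
    intro hc
    rcases Finset.mem_union.mp hc with h | h
    · rw [hP1] at h
      obtain ⟨m'', _, hme⟩ := Finset.mem_image.mp h
      have h1 := Finset.orderEmbOfFin_mem (Bᶜ) hC m''
      rw [hme] at h1
      exact (Finset.mem_compl.mp h1) (hmemB m)
    · rw [hP2] at h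
      obtain ⟨j, hj1, hj2⟩ := Finset.mem_image.mp h
      simp only [Finset.mem_filter, Finset.mem_univ, true_and] at hj1
      have := hinj hj2
      omega
  have key : ∀ k, k ≤ n →
      (pstate n τ k).1 = (univ.filter fun j : Fin n => (j:ℕ) < k).image ((Bᶜ).orderEmbOfFin hC)
      ∧ (pstate n τ k).2 = (univ.filter fun j : Fin n => (j:ℕ) < k).image τ := by
    intro k
    induction k with
    | zero => intro _; exact ⟨by simp [pstate], by simp [pstate]⟩
    | succ k IH =>
      intro hk1
      have hk : k < n := hk1
      obtain ⟨hP1, hP2⟩ := IH (le_of_lt hk)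
      have hbu : τ ⟨k, hk⟩ ∈ uset n τ k :=
        hfree k (le_of_lt hk) hP1 hP2 ⟨k, hk⟩ le_rfl
      have hdisj : Disjoint (pstate n τ k).1 (pstate n τ k).2 := by
        rw [Finset.disjoint_left]
        intro x hx1 hx2
        rw [hP1] at hx1
        rw [hP2] at hx2
        obtain ⟨m1, _, hme1⟩ := Finset.mem_image.mp hx1
        obtain ⟨j2, _, hme2⟩ := Finset.mem_image.mp hx2
        have h1 := Finset.orderEmbOfFin_mem (Bᶜ) hC m1
        rw [hme1] at h1
        rw [← hme2] at h1
        exact (Finset.mem_compl.mp h1) (hmemB j2)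
      have hucard : (uset n τ k).card = 2*n - 2*k := by
        rw [uset, card_sdiff_of_subset (subset_univ _), card_union_of_disjoint hdisj, hP1, hP2,
          Finset.card_image_of_injective _ ((Bᶜ).orderEmbOfFin hC).injective,
          Finset.card_image_of_injective _ hinj, card_filter_val_lt n k (le_of_lt hk),
          card_univ, Fintype.card_fin]
        omega
      have hane : ((uset n τ k).erase (τ ⟨k, hk⟩)).Nonempty := by
        rw [← Finset.card_pos, Finset.card_erase_of_mem hbu, hucard]; omega
      rw [pstate_succ_of hk hbu hane]
      have hcEk : (Bᶜ).orderEmbOfFin hC ⟨k, hk⟩ ∈ (uset n τ k).erase (τ ⟨k, hk⟩) := by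
        rw [Finset.mem_erase]
        constructor
        · intro hc
          have h1 := Finset.orderEmbOfFin_mem (Bᶜ) hC ⟨k, hk⟩
          rw [hc] at h1
          exact (Finset.mem_compl.mp h1) (hmemB ⟨k, hk⟩)
        · rw [uset, Finset.mem_sdiff]
          refine ⟨mem_univ _, ?_⟩
          intro hc
          rcases Finset.mem_union.mp hc with h | h
          · rw [hP1] at h
            obtain ⟨m', hm', hme⟩ := Finset.mem_image.mp h
            simp only [Finset.mem_filter, Finset.mem_univ, true_and] at hm'
            have hmeq := ((Bᶜ).orderEmbOfFin hC).injective hme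
            have hval : (m' : ℕ) = k := by rw [hmeq]
            omega
          · rw [hP2] at h
            obtain ⟨j, _, hj⟩ := Finset.mem_image.mp h
            have h1 := Finset.orderEmbOfFin_mem (Bᶜ) hC ⟨k, hk⟩
            rw [← hj] at h1
            exact (Finset.mem_compl.mp h1) (hmemB j)
      have hmin : ((uset n τ k).erase (τ ⟨k, hk⟩)).min' hane
          = (Bᶜ).orderEmbOfFin hC ⟨k, hk⟩ := by
        apply le_antisymm (Finset.min'_le _ _ hcEk)
        apply Finset.le_min'
        intro x hx
        by_contra hlt
        push_neg at hlt
        have hxe := Finset.mem_erase.mp hx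
        by_cases hxB : x ∈ B
        · obtain ⟨i, hi⟩ : ∃ i, B.orderEmbOfFin hB i = x := by
            have : x ∈ Set.range (B.orderEmbOfFin hB) := by
              rw [Finset.range_orderEmbOfFin]; exact_mod_cast hxB
            exact this
          obtain ⟨j, hjk, hj⟩ := hD i ⟨k, hk⟩ (by rw [hi]; exact hlt)
          rw [hi] at hj
          rcases lt_or_eq_of_le (Fin.le_def.mp hjk) with h | h
          · have : x ∈ (pstate n τ k).2 := by
              rw [hP2]
              exact Finset.mem_image.mpr ⟨j, by simp; exact h, hj⟩
            exact (Finset.mem_sdiff.mp hxe.2).2 (Finset.mem_union_right _ this)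
          · exact hxe.1 (by rw [← hj]; congr 1; exact Fin.ext h)
        · obtain ⟨m', hm'⟩ : ∃ m', (Bᶜ).orderEmbOfFin hC m' = x := by
            have : x ∈ Set.range ((Bᶜ).orderEmbOfFin hC) := by
              rw [Finset.range_orderEmbOfFin]
              exact_mod_cast Finset.mem_compl.mpr hxB
            exact this
          have hm'k : (m':ℕ) < k := by
            have h2 : (Bᶜ).orderEmbOfFin hC m' < (Bᶜ).orderEmbOfFin hC ⟨k, hk⟩ := by
              rw [hm']; exact hlt
            exact ((Bᶜ).orderEmbOfFin hC).strictMono.lt_iff_lt.mp h2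
          have : x ∈ (pstate n τ k).1 := by
            rw [hP1]
            exact Finset.mem_image.mpr ⟨m', by simp [hm'k], hm'⟩
          exact (Finset.mem_sdiff.mp hxe.2).2 (Finset.mem_union_left _ this)
      have hfilt : (univ.filter fun j : Fin n => (j:ℕ) < k+1)
          = insert ⟨k, hk⟩ (univ.filter fun j : Fin n => (j:ℕ) < k) := by
        ext j
        simp only [Finset.mem_filter, Finset.mem_univ, true_and, Finset.mem_insert,
          Fin.ext_iff]
        omega
      constructor
      · show insert _ (pstate n τ k).1 = _
        rw [hmin, hfilt, Finset.image_insert, hP1]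
      · show insert _ (pstate n τ k).2 = _
        rw [hfilt, Finset.image_insert, hP2]
  intro k
  obtain ⟨hP1, hP2⟩ := key (k:ℕ) (le_of_lt k.isLt)
  exact hfree (k:ℕ) (le_of_lt k.isLt) hP1 hP2 k le_rfl

end Dead2

section VCard
variable {n : ℕ} {B : Finset (Fin (2*n))}

lemma validT_card_eq (hB : B.card = n) (hC : (Bᶜ).card = n) :
    (validT n B).card = (univ.filter fun σ : Equiv.Perm (Fin n) =>
      ∀ i : Fin n, (σ i : ℕ) ≤ min (((Bᶜ).filter (· < B.orderEmbOfFin hB i)).card) (n-1)).card := by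
  classical
  symm
  apply Finset.card_bij (fun σ _ => fun k => B.orderEmbOfFin hB (σ.symm k))
  · -- maps into validT
    intro σ hσ
    simp only [Finset.mem_filter, Finset.mem_univ, true_and] at hσ
    have hinj' : Function.Injective (fun k => B.orderEmbOfFin hB (σ.symm k)) :=
      fun a b hab => σ.symm.injective ((B.orderEmbOfFin hB).injective hab)
    have himgu : Finset.univ.image σ.symm = Finset.univ :=
      Finset.eq_univ_iff_forall.mpr
        (fun x => Finset.mem_image.mpr ⟨σ x, mem_univ _, Equiv.symm_apply_apply σ x⟩)
    have himg' : Finset.univ.image (fun k => B.orderEmbOfFin hB (σ.symm k)) = B := by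
      have h1 : Finset.univ.image (fun k => B.orderEmbOfFin hB (σ.symm k))
          = (Finset.univ.image σ.symm).image (B.orderEmbOfFin hB) := by
        rw [Finset.image_image]
        rfl
      rw [h1, himgu, orderEmb_image_univ]
    have hD' : ∀ (i k : Fin n), B.orderEmbOfFin hB i < (Bᶜ).orderEmbOfFin hC k →
        ∃ j : Fin n, j ≤ k ∧ (fun k => B.orderEmbOfFin hB (σ.symm k)) j
          = B.orderEmbOfFin hB i := by
      intro i k hik
      have hK := (bE_lt_cE_iff hB hC i k).mp hik
      refine ⟨σ i, ?_, by simp only [Equiv.symm_apply_apply]⟩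
      rw [Fin.le_def]
      have := hσ i
      omega
    simp only [validT, Finset.mem_filter, Finset.mem_univ, true_and]
    exact ⟨dead_adm hB hC hinj' himg' hD', himg'⟩
  · -- injective
    intro σ1 h1 σ2 h2 heq
    have hsymm : ∀ k, σ1.symm k = σ2.symm k :=
      fun k => (B.orderEmbOfFin hB).injective (congrFun heq k)
    have h3 : σ1.symm = σ2.symm := Equiv.ext hsymm
    calc σ1 = σ1.symm.symm := (Equiv.symm_symm _).symm
      _ = σ2.symm.symm := by rw [h3]
      _ = σ2 := Equiv.symm_symm _
  · -- surjective
    intro τ hτ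
    simp only [validT, Finset.mem_filter, Finset.mem_univ, true_and] at hτ
    obtain ⟨hA, himg⟩ := hτ
    have hinj := adm_inj hA
    have hmemB : ∀ j : Fin n, τ j ∈ B := fun j => by
      rw [← himg]; exact Finset.mem_image_of_mem τ (mem_univ j)
    set e2 : Fin n ≃ {x // x ∈ B} := Equiv.ofBijective
      (fun k => (⟨τ k, hmemB k⟩ : {x // x ∈ B}))
      ⟨fun a b hab => hinj (congrArg Subtype.val hab), by
        rintro ⟨b, hb⟩
        rw [← himg] at hb
        obtain ⟨k, _, hk⟩ := Finset.mem_image.mp hb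
        exact ⟨k, Subtype.ext hk⟩⟩ with he2def
    have he2 : ∀ k, (e2 k : Fin (2*n)) = τ k := fun k => rfl
    set e1 : Fin n ≃ {x // x ∈ B} := (B.orderIsoOfFin hB).toEquiv with he1def
    have he1 : ∀ j, ((e1 j : {x // x ∈ B}) : Fin (2*n)) = B.orderEmbOfFin hB j :=
      fun j => Finset.coe_orderIsoOfFin_apply B hB j
    set σ : Equiv.Perm (Fin n) := (e2.trans e1.symm).symm with hσdef
    have hkey : ∀ k, B.orderEmbOfFin hB (σ.symm k) = τ k := by
      intro k
      have hs : σ.symm k = e1.symm (e2 k) := rfl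
      rw [hs, ← he1, Equiv.apply_symm_apply, he2]
    have hτσ : ∀ i, τ (σ i) = B.orderEmbOfFin hB i := by
      intro i
      have := hkey (σ i)
      rw [Equiv.symm_apply_apply] at this
      exact this.symm
    refine ⟨σ, ?_, by funext k; exact hkey k⟩
    simp only [Finset.mem_filter, Finset.mem_univ, true_and]
    intro i
    have hD := adm_dead hB hC himg hA
    rw [Nat.le_min]
    constructor
    · rcases Nat.lt_or_ge (((Bᶜ).filter (· < B.orderEmbOfFin hB i)).card) n with h | h
      · obtain ⟨j, hjk, hj⟩ := hD i ⟨_, h⟩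
          ((bE_lt_cE_iff hB hC i ⟨_, h⟩).mpr le_rfl)
        rw [← hτσ i] at hj
        have : j = σ i := hinj hj
        subst this
        exact Fin.le_def.mp hjk
      · have := (σ i).isLt
        omega
    · have := (σ i).isLt
      omega

lemma validT_card (hB : B.card = n) (hC : (Bᶜ).card = n)
    (hlow : ∀ i : Fin n, (i:ℕ) ≤ min (((Bᶜ).filter (· < B.orderEmbOfFin hB i)).card) (n-1)) :
    (validT n B).card
      = ∏ i : Fin n, (min (((Bᶜ).filter (· < B.orderEmbOfFin hB i)).card) (n-1) + 1 - (i:ℕ)) := by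
  rw [validT_card_eq hB hC]
  apply deadline_count n _
  · intro i j hij
    have hsub : (Bᶜ).filter (· < B.orderEmbOfFin hB i) ⊆ (Bᶜ).filter (· < B.orderEmbOfFin hB j) := by
      intro x hx
      rw [Finset.mem_filter] at hx ⊢
      exact ⟨hx.1, lt_of_lt_of_le hx.2 ((B.orderEmbOfFin hB).monotone hij)⟩
    exact min_le_min (Finset.card_le_card hsub) le_rfl
  · exact hlow
  · intro i
    have := i.pos
    omega

end VCard

section Assemble

lemma orderEmbOfFin_eq_of_count {α : Type*} [LinearOrder α] {s : Finset α} {m : ℕ}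
    (h : s.card = m) {y : α} (hy : y ∈ s) {j : ℕ} (hj : j < m)
    (hcount : (s.filter (· < y)).card = j) : s.orderEmbOfFin h ⟨j, hj⟩ = y := by
  obtain ⟨mm, hmm⟩ : ∃ mm, s.orderEmbOfFin h mm = y := by
    have : y ∈ Set.range (s.orderEmbOfFin h) := by
      rw [Finset.range_orderEmbOfFin]; exact_mod_cast hy
    exact this
  have hcnt := filter_lt_orderEmbOfFin s h mm
  rw [hmm, hcount] at hcnt
  rw [← hmm]
  congr 1
  exact Fin.ext hcnt

lemma card_filter_lt_fin {m : ℕ} (x : Fin m) :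
    (univ.filter fun y : Fin m => y < x).card = (x:ℕ) := by
  have himg : (univ.filter fun y : Fin m => y < x).image Fin.val = Finset.range (x:ℕ) := by
    ext z
    simp only [Finset.mem_image, Finset.mem_filter, Finset.mem_univ, true_and,
      Finset.mem_range]
    constructor
    · rintro ⟨y, hy, rfl⟩; exact hy
    · intro hz
      exact ⟨⟨z, lt_trans hz x.isLt⟩, by rw [Fin.lt_def]; exact hz, rfl⟩
  calc (univ.filter fun y : Fin m => y < x).card
      = ((univ.filter fun y : Fin m => y < x).image Fin.val).card :=
        (Finset.card_image_of_injective _ Fin.val_injective).symm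
    _ = (Finset.range (x:ℕ)).card := by rw [himg]
    _ = (x:ℕ) := Finset.card_range _

variable {n : ℕ}

lemma dyck_card {β : Finset ℕ} (hβ : IsDyck (2*n+2) β) : β.card = n + 1 := by
  have := hβ.2.1; omega

lemma dyck_one_not_mem {β : Finset ℕ} (hβ : IsDyck (2*n+2) β) : 1 ∉ β := by
  intro h
  have h2 := hβ.2.2 1 (by omega)
  have h3 : (1:ℕ) ∈ β.filter (· ≤ 1) := Finset.mem_filter.mpr ⟨h, le_rfl⟩
  have := Finset.card_pos.mpr ⟨1, h3⟩
  omega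

lemma dyck_mem_range {β : Finset ℕ} (hβ : IsDyck (2*n+2) β) :
    ∀ x ∈ β, 2 ≤ x ∧ x ≤ 2*n+2 := by
  intro x hx
  have h1 := Finset.mem_Icc.mp (hβ.1 hx)
  have h2 : x ≠ 1 := fun hc => dyck_one_not_mem hβ (hc ▸ hx)
  omega

lemma dyck_top_mem {β : Finset ℕ} (hβ : IsDyck (2*n+2) β) : 2*n+2 ∈ β := by
  by_contra h
  have hfe : β.filter (· ≤ 2*n+1) = β := by
    apply Finset.filter_true_of_mem
    intro x hx
    have h1 := (dyck_mem_range hβ x hx).2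
    have h2 : x ≠ 2*n+2 := fun hc => h (hc ▸ hx)
    omega
  have h2 := hβ.2.2 (2*n+1) (by omega)
  rw [hfe] at h2
  have := dyck_card hβ
  omega

end Assemble

-- ==== end auxiliary ====

/-- Bob's marginal: for a fixed Dyck path `β` of length `2n + 2`, the number of
permutations `w` with `p_B(w) = β` is `1·3⋯(2n-1) · ∏_{i=1}^n h_i^*(β)`. -/
theorem stmt10 (n : ℕ) (β : Finset ℕ) (hβ : IsDyck (2 * n + 2) β) :
    (Finset.univ.filter (fun w : Equiv.Perm (Fin (2 * n)) => pBset w = β)).card =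
      (∏ i ∈ Finset.range n, (2 * i + 1)) * ∏ i ∈ Finset.Icc 1 n, hstar (2 * n + 2) β i := by
  classical
  have hcardβ : β.card = n + 1 := dyck_card hβ
  have htop : 2*n+2 ∈ β := dyck_top_mem hβ
  have hrange := dyck_mem_range hβ
  set B : Finset (Fin (2*n)) := univ.filter (fun b => (b:ℕ) + 2 ∈ β) with hBdef
  have hmemB_iff : ∀ b : Fin (2*n), b ∈ B ↔ (b:ℕ) + 2 ∈ β := by
    intro b; rw [hBdef, Finset.mem_filter]; simp
  have himgB : B.image (fun b : Fin (2*n) => (b:ℕ)+2) = β.erase (2*n+2) := by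
    ext x
    simp only [Finset.mem_image, Finset.mem_erase]
    constructor
    · rintro ⟨b, hb, rfl⟩
      have hlt := b.isLt
      exact ⟨by omega, (hmemB_iff b).mp hb⟩
    · rintro ⟨hxne, hx⟩
      have h2 := hrange x hx
      refine ⟨⟨x - 2, by omega⟩, (hmemB_iff _).mpr ?_, by show (x-2)+2 = x; omega⟩
      show (x - 2) + 2 ∈ β
      have hxx : x - 2 + 2 = x := by omega
      rw [hxx]
      exact hx
  have hvalinj : Function.Injective (fun b : Fin (2*n) => (b:ℕ)+2) := by
    intro a b hab
    simp only [] at hab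
    exact Fin.ext (by omega)
  have hBcard : B.card = n := by
    have h3 := Finset.card_image_of_injective B hvalinj
    rw [himgB, Finset.card_erase_of_mem htop, hcardβ] at h3
    omega
  have hCcard : (Bᶜ).card = n := by
    rw [Finset.card_compl, Fintype.card_fin, hBcard]; omega
  have hmarkBcard : ∀ w : Equiv.Perm (Fin (2*n)), (markB w).card = n := fun w => by
    rw [markB_eq]; exact (crossout_card w n le_rfl).2.1
  have hpB : ∀ w : Equiv.Perm (Fin (2*n)), pBset w = β ↔ markB w = B := by
    intro w
    constructor
    · intro h
      apply Finset.eq_of_subset_of_card_le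
      · intro b hb
        rw [hmemB_iff, ← h]
        unfold pBset
        exact Finset.mem_insert_of_mem (Finset.mem_image_of_mem _ hb)
      · rw [hBcard, hmarkBcard w]
    · intro h
      unfold pBset
      rw [h, himgB, Finset.insert_erase htop]
  have hLHS : (Finset.univ.filter (fun w : Equiv.Perm (Fin (2 * n)) => pBset w = β))
      = (univ.filter fun w : Equiv.Perm (Fin (2*n)) => markB w = B) :=
    Finset.filter_congr (fun w _ => by rw [hpB w])
  rw [hLHS, decomp_card B]
  have hK : 0 < (2:ℕ)^n * n.factorial := by positivity
  have hodd : ∀ τ ∈ validT n B, (univ.filter fun w => CondUpTo n τ n w).card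
      = ∏ i ∈ Finset.range n, (2*i+1) := by
    intro τ hτ
    simp only [validT, Finset.mem_filter, Finset.mem_univ, true_and] at hτ
    have h1 := cond_card hτ.1
    rw [prod_even_eq] at h1
    apply Nat.eq_of_mul_eq_mul_right hK
    rw [h1, doublefact n]
  rw [Finset.sum_congr rfl hodd, Finset.sum_const, smul_eq_mul]
  have hper : ∀ i : Fin n,
      hstar (2*n+2) β ((i:ℕ)+1)
        = min (((Bᶜ).filter (· < B.orderEmbOfFin hBcard i)).card) (n-1) + 1 - (i:ℕ)
      ∧ (i:ℕ) ≤ min (((Bᶜ).filter (· < B.orderEmbOfFin hBcard i)).card) (n-1) := by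
    intro i
    set x := B.orderEmbOfFin hBcard i with hxdef
    have hxB : x ∈ B := Finset.orderEmbOfFin_mem B hBcard i
    have hxβ : (x:ℕ)+2 ∈ β := (hmemB_iff x).mp hxB
    have hxlt := x.isLt
    have hfiltβ : β.filter (· < (x:ℕ)+2)
        = (B.filter (· < x)).image (fun b : Fin (2*n) => (b:ℕ)+2) := by
      ext y
      simp only [Finset.mem_filter, Finset.mem_image]
      constructor
      · rintro ⟨hy, hylt⟩
        have h2 := hrange y hy
        refine ⟨⟨y - 2, by omega⟩, ⟨(hmemB_iff _).mpr ?_, ?_⟩, by show (y-2)+2 = y; omega⟩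
        · show (y - 2) + 2 ∈ β
          have hyy : y - 2 + 2 = y := by omega
          rw [hyy]; exact hy
        · rw [Fin.lt_def]; show y - 2 < (x:ℕ); omega
      · rintro ⟨b, ⟨hbB, hblt⟩, rfl⟩
        exact ⟨(hmemB_iff b).mp hbB, by have := Fin.lt_def.mp hblt; omega⟩
    have hKβ : (β.filter (· < (x:ℕ)+2)).card = (i:ℕ) := by
      rw [hfiltβ, Finset.card_image_of_injective _ hvalinj,
        filter_lt_orderEmbOfFin B hBcard i]
    have hKβle : (β.filter (· ≤ (x:ℕ)+2)).card = (i:ℕ)+1 := by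
      have hsplit : β.filter (· ≤ (x:ℕ)+2) = insert ((x:ℕ)+2) (β.filter (· < (x:ℕ)+2)) := by
        ext y
        simp only [Finset.mem_filter, Finset.mem_insert]
        constructor
        · rintro ⟨hy, hyle⟩
          rcases eq_or_lt_of_le hyle with h | h
          · exact Or.inl h
          · exact Or.inr ⟨hy, h⟩
        · rintro (rfl | ⟨hy, hylt⟩)
          · exact ⟨hxβ, le_rfl⟩
          · exact ⟨hy, le_of_lt hylt⟩
      rw [hsplit, Finset.card_insert_of_notMem (by simp), hKβ]
    have hx2i : 2*(i:ℕ) ≤ (x:ℕ) := by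
      have := hβ.2.2 ((x:ℕ)+2) (by omega)
      rw [hKβle] at this
      omega
    have hsplit2 : (B.filter (· < x)).card + ((Bᶜ).filter (· < x)).card = (x:ℕ) := by
      have hu : (univ.filter fun y : Fin (2*n) => y < x)
          = B.filter (· < x) ∪ (Bᶜ).filter (· < x) := by
        rw [← Finset.filter_union, Finset.union_compl]
      have hd : Disjoint (B.filter (· < x)) ((Bᶜ).filter (· < x)) :=
        Finset.disjoint_filter_filter disjoint_compl_right
      rw [← card_filter_lt_fin x, hu, Finset.card_union_of_disjoint hd]
    have hKB : (B.filter (· < x)).card = (i:ℕ) := filter_lt_orderEmbOfFin B hBcard i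
    have hKi : ((Bᶜ).filter (· < x)).card = (x:ℕ) - (i:ℕ) := by omega
    have hcond : (Finset.Ioc ((x:ℕ)+2) (2*n+2) ⊆ β) ↔ ((Bᶜ).filter (· < x)).card = n := by
      constructor
      · intro hsub
        have hall : (Bᶜ).filter (· < x) = Bᶜ := by
          apply Finset.filter_true_of_mem
          intro c hc
          by_contra hcx
          push_neg at hcx
          have hcne : c ≠ x := fun h => (Finset.mem_compl.mp hc) (h ▸ hxB)
          have hgt : (x:ℕ) < (c:ℕ) := by
            have h5 := Fin.le_def.mp hcx
            have h6 : (x:ℕ) ≠ (c:ℕ) := fun h => hcne (Fin.ext h.symm)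
            omega
          have hmem : (c:ℕ)+2 ∈ Finset.Ioc ((x:ℕ)+2) (2*n+2) := by
            rw [Finset.mem_Ioc]
            have := c.isLt
            omega
          exact (Finset.mem_compl.mp hc) ((hmemB_iff c).mpr (hsub hmem))
        rw [hall, hCcard]
      · intro hcard
        have hall : (Bᶜ).filter (· < x) = Bᶜ :=
          Finset.eq_of_subset_of_card_le (Finset.filter_subset _ _)
            (by rw [hcard, hCcard])
        intro y hy
        rw [Finset.mem_Ioc] at hy
        rcases eq_or_lt_of_le hy.2 with h | h
        · rw [h]; exact htop
        · have hcB : (⟨y - 2, by omega⟩ : Fin (2*n)) ∈ B := by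
            by_contra hcB
            have hcc : (⟨y - 2, by omega⟩ : Fin (2*n)) ∈ Bᶜ := Finset.mem_compl.mpr hcB
            have hcc2 : (⟨y - 2, by omega⟩ : Fin (2*n)) ∈ (Bᶜ).filter (· < x) :=
              (Finset.ext_iff.mp hall _).mpr hcc
            have h7 := (Finset.mem_filter.mp hcc2).2
            have h8 : y - 2 < (x:ℕ) := Fin.lt_def.mp h7
            omega
          have h9 : y - 2 + 2 ∈ β := (hmemB_iff _).mp hcB
          have hy2 : y - 2 + 2 = y := by omega
          rwa [hy2] at h9
    have hdstep : dstep β ((i:ℕ)+1) = (x:ℕ)+2 := by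
      have h1 := dstep_orderEmbOfFin β hcardβ ⟨(i:ℕ), by omega⟩
      rw [h1]
      exact orderEmbOfFin_eq_of_count hcardβ hxβ (by omega) hKβ
    have hin : (i:ℕ) < n := i.isLt
    constructor
    · rw [hstar, ht, hdstep]
      rcases Nat.lt_or_ge (((Bᶜ).filter (· < x)).card) n with hlt | hge
      · rw [if_neg (fun hc => by rw [hcond.mp hc] at hlt; omega)]
        omega
      · have heq : ((Bᶜ).filter (· < x)).card = n := by
          have h10 : ((Bᶜ).filter (· < x)).card ≤ n :=
            le_trans (Finset.card_le_card (Finset.filter_subset _ _)) (le_of_eq hCcard)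
          omega
        rw [if_pos (hcond.mpr heq)]
        omega
    · omega
  rw [validT_card hBcard hCcard (fun i => (hper i).2)]
  have hIcc : ∏ i ∈ Finset.Icc 1 n, hstar (2*n+2) β i
      = ∏ i : Fin n,
          (min (((Bᶜ).filter (· < B.orderEmbOfFin hBcard i)).card) (n-1) + 1 - (i:ℕ)) := by
    rw [← Finset.Ico_add_one_right_eq_Icc, Finset.prod_Ico_eq_prod_range]
    have hnn : n + 1 - 1 = n := by omega
    rw [hnn]
    rw [← Fin.prod_univ_eq_prod_range (fun j => hstar (2*n+2) β (1+j)) n]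
    apply Finset.prod_congr rfl
    intro i _
    rw [Nat.add_comm 1 (i:ℕ)]
    exact (hper i).1
  rw [hIcc]
  exact Nat.mul_comm _ _
end

section
/- The number of Hermite histories of length 2n, i.e., pairs (α, ℓ) where α is a Dyck path of length 2n and ℓ assigns to each down step an integer between 1 and its height, equals 1·3·5···(2n-1). -/
open Finset

/-! ### Auxiliary development for Statement 12 -/

section Aux12

open Finset

/-- Generalized paths: down-step sets of paths of length `m` starting at height `h`
and ending at height `0`, staying nonnegative. -/
def PathSet (m h : ℕ) : Finset (Finset ℕ) :=
  (Finset.Icc 1 m).powerset.filter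
    (fun D => 2 * D.card = m + h ∧ ∀ k ≤ m, 2 * (D.filter (· ≤ k)).card ≤ k + h)

/-- Weight of a path: product of the heights of its down steps. -/
def wgt (h : ℕ) (D : Finset ℕ) : ℕ :=
  ∏ j ∈ Finset.range D.card, (h + (D.sort (· ≤ ·)).getD j 0 - (2 * j + 1))

/-- Weighted count of paths. -/
def Swt (m h : ℕ) : ℕ := ∑ D ∈ PathSet m h, wgt h D

lemma mem_PathSet {m h : ℕ} {D : Finset ℕ} :
    D ∈ PathSet m h ↔ D ⊆ Finset.Icc 1 m ∧ 2 * D.card = m + h ∧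
      ∀ k ≤ m, 2 * (D.filter (· ≤ k)).card ≤ k + h := by
  simp [PathSet, and_assoc]

lemma sort_image_succ (D : Finset ℕ) :
    (D.image (· + 1)).sort (· ≤ ·) = (D.sort (· ≤ ·)).map (· + 1) := by
  have hval : (D.image (· + 1)).val = D.val.map (· + 1) :=
    Finset.image_val_of_injOn (fun a _ b _ hab => by simpa using hab)
  unfold Finset.sort
  have hms := Multiset.map_sort (r := (· ≤ ·)) (r' := (· ≤ ·)) (f := (· + 1)) (s := D.val)
    (fun a _ b _ => by show a ≤ b ↔ a + 1 ≤ b + 1; omega)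
  rw [hval, ← hms]

lemma one_not_mem_image_succ {D : Finset ℕ} (h0 : 0 ∉ D) : 1 ∉ D.image (· + 1) := by
  simp only [Finset.mem_image]
  rintro ⟨a, ha, ha1⟩
  have : a + 1 = 1 := by simpa using ha1
  have : a = 0 := by omega
  exact h0 (this ▸ ha)

lemma card_image_succ (D : Finset ℕ) : (D.image (· + 1)).card = D.card :=
  Finset.card_image_of_injective _ (add_left_injective 1)

lemma filter_image_succ (D : Finset ℕ) (k : ℕ) :
    (D.image (· + 1)).filter (· ≤ k + 1) = (D.filter (· ≤ k)).image (· + 1) := by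
  rw [Finset.filter_image]
  congr 1
  apply Finset.filter_congr
  intro x _
  show x + 1 ≤ k + 1 ↔ x ≤ k
  omega

lemma wgt_image_succ (h : ℕ) (D : Finset ℕ) :
    wgt h (D.image (· + 1)) = wgt (h + 1) D := by
  unfold wgt
  rw [card_image_succ, sort_image_succ]
  apply Finset.prod_congr rfl
  intro j hj
  rw [Finset.mem_range] at hj
  have hlen : j < (D.sort (· ≤ ·)).length := by
    rwa [Finset.length_sort]
  rw [List.getD_eq_getElem _ _ (by simpa using hlen), List.getD_eq_getElem _ _ hlen,
    List.getElem_map]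
  omega

/-- Membership transfer for the "up first step" case. -/
lemma image_succ_mem_PathSet {m h : ℕ} {D : Finset ℕ} (hD : D ∈ PathSet m (h + 1)) :
    D.image (· + 1) ∈ PathSet (m + 1) h := by
  rw [mem_PathSet] at hD ⊢
  obtain ⟨hsub, hcard, hpre⟩ := hD
  refine ⟨?_, ?_, ?_⟩
  · intro x hx
    simp only [Finset.mem_image] at hx
    obtain ⟨a, ha, rfl⟩ := hx
    have := hsub ha
    simp only [Finset.mem_Icc] at this ⊢
    omega
  · rw [card_image_succ]; omega
  · intro k hk
    match k with
    | 0 =>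
      have : (D.image (· + 1)).filter (· ≤ 0) = ∅ := by
        apply Finset.filter_eq_empty_iff.mpr
        intro x hx
        simp only [Finset.mem_image] at hx
        obtain ⟨a, _, rfl⟩ := hx
        omega
      rw [this, Finset.card_empty]; omega
    | k + 1 =>
      rw [filter_image_succ, card_image_succ]
      have := hpre k (by omega)
      omega

/-- Membership transfer for the "down first step" case. -/
lemma insert_one_mem_PathSet {m h : ℕ} {D : Finset ℕ} (hD : D ∈ PathSet m h) :
    insert 1 (D.image (· + 1)) ∈ PathSet (m + 1) (h + 1) := by
  rw [mem_PathSet] at hD ⊢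
  obtain ⟨hsub, hcard, hpre⟩ := hD
  have h0 : 0 ∉ D := fun hx => by simpa using hsub hx
  refine ⟨?_, ?_, ?_⟩
  · intro x hx
    simp only [Finset.mem_insert, Finset.mem_image] at hx
    rcases hx with rfl | ⟨a, ha, rfl⟩
    · simp only [Finset.mem_Icc]; omega
    · have := hsub ha
      simp only [Finset.mem_Icc] at this ⊢
      omega
  · rw [Finset.card_insert_of_notMem (one_not_mem_image_succ h0), card_image_succ]
    omega
  · intro k hk
    match k with
    | 0 =>
      have : (insert 1 (D.image (· + 1))).filter (· ≤ 0) = ∅ := by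
        apply Finset.filter_eq_empty_iff.mpr
        intro x hx
        simp only [Finset.mem_insert, Finset.mem_image] at hx
        rcases hx with rfl | ⟨a, _, rfl⟩ <;> omega
      rw [this, Finset.card_empty]; omega
    | k + 1 =>
      rw [Finset.filter_insert]
      simp only [show (1 : ℕ) ≤ k + 1 by omega, if_pos]
      rw [Finset.card_insert_of_notMem (by
        intro hmem
        exact one_not_mem_image_succ h0 (Finset.mem_of_mem_filter _ hmem)),
        filter_image_succ, card_image_succ]
      have := hpre k (by omega)
      omega

lemma wgt_insert_one (h : ℕ) {D : Finset ℕ} (h0 : 0 ∉ D) :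
    wgt (h + 1) (insert 1 (D.image (· + 1))) = (h + 1) * wgt h D := by
  unfold wgt
  rw [Finset.card_insert_of_notMem (one_not_mem_image_succ h0), card_image_succ,
    Finset.sort_insert _ (fun b hb => ?_) (one_not_mem_image_succ h0), sort_image_succ]
  swap
  · simp only [Finset.mem_image] at hb
    obtain ⟨a, _, rfl⟩ := hb; omega
  rw [Finset.prod_range_succ']
  have h0 : (h + 1 + ((1 :: (D.sort (· ≤ ·)).map (· + 1)).getD 0 0) - (2 * 0 + 1)) = h + 1 := by
    simp
  rw [h0, Nat.mul_comm]
  congr 1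
  apply Finset.prod_congr rfl
  intro j hj
  rw [Finset.mem_range] at hj
  have hlen : j < (D.sort (· ≤ ·)).length := by rwa [Finset.length_sort]
  have : (1 :: (D.sort (· ≤ ·)).map (· + 1)).getD (j + 1) 0
      = (D.sort (· ≤ ·)).getD j 0 + 1 := by
    rw [List.getD_cons_succ, List.getD_eq_getElem _ _ (by simpa using hlen),
      List.getD_eq_getElem _ _ hlen, List.getElem_map]
  rw [this, List.getD_eq_getElem _ _ hlen]
  omega

/-- Recovering the tail path: if `1 ∉ D` and elements are in `[2, m+1]`. -/
lemma eq_image_succ_of_one_not_mem {D : Finset ℕ} (hD : ∀ x ∈ D, 2 ≤ x) :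
    (D.image (· - 1)).image (· + 1) = D := by
  rw [Finset.image_image]
  rw [show ((· + 1) ∘ (· - 1) : ℕ → ℕ) = fun x => x - 1 + 1 from rfl]
  have : ∀ x ∈ D, x - 1 + 1 = id x := fun x hx => by have := hD x hx; simp; omega
  rw [Finset.image_congr (fun x hx => this x hx), Finset.image_id]

lemma shift_mem_PathSet {m h : ℕ} {D : Finset ℕ} (hD : D ∈ PathSet (m + 1) h)
    (h1 : 1 ∉ D) : D.image (· - 1) ∈ PathSet m (h + 1) := by
  rw [mem_PathSet] at hD ⊢
  obtain ⟨hsub, hcard, hpre⟩ := hD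
  have h2 : ∀ x ∈ D, 2 ≤ x ∧ x ≤ m + 1 := by
    intro x hx
    have := hsub hx
    simp only [Finset.mem_Icc] at this
    constructor
    · rcases Nat.lt_or_ge x 2 with hc | hc
      · interval_cases x
        · omega
        · exact absurd hx h1
      · exact hc
    · exact this.2
  have hinj : Set.InjOn (· - 1) D := by
    intro a ha b hb hab
    have := h2 a ha; have := h2 b hb
    simp only at hab; omega
  refine ⟨?_, ?_, ?_⟩
  · intro x hx
    simp only [Finset.mem_image] at hx
    obtain ⟨a, ha, rfl⟩ := hx
    have := h2 a ha
    simp only [Finset.mem_Icc]; omega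
  · rw [Finset.card_image_of_injOn hinj]; omega
  · intro k hk
    have hfil : (D.image (· - 1)).filter (· ≤ k) = (D.filter (· ≤ k + 1)).image (· - 1) := by
      rw [Finset.filter_image]
      congr 1
      apply Finset.filter_congr
      intro x hx
      show x - 1 ≤ k ↔ x ≤ k + 1
      omega
    rw [hfil, Finset.card_image_of_injOn (hinj.mono (Finset.filter_subset _ _))]
    have := hpre (k + 1) (by omega)
    omega

lemma erase_shift_mem_PathSet {m h : ℕ} {D : Finset ℕ}
    (hD : D ∈ PathSet (m + 1) (h + 1)) (h1 : 1 ∈ D) :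
    (D.erase 1).image (· - 1) ∈ PathSet m h := by
  rw [mem_PathSet] at hD ⊢
  obtain ⟨hsub, hcard, hpre⟩ := hD
  have h2 : ∀ x ∈ D.erase 1, 2 ≤ x ∧ x ≤ m + 1 := by
    intro x hx
    rw [Finset.mem_erase] at hx
    have := hsub hx.2
    simp only [Finset.mem_Icc] at this
    have := hx.1
    omega
  have hinj : Set.InjOn (· - 1) (D.erase 1) := by
    intro a ha b hb hab
    have := h2 a ha; have := h2 b hb
    simp only at hab; omega
  have hce : (D.erase 1).card = D.card - 1 := Finset.card_erase_of_mem h1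
  have hDpos : 1 ≤ D.card := Finset.card_pos.mpr ⟨1, h1⟩
  refine ⟨?_, ?_, ?_⟩
  · intro x hx
    simp only [Finset.mem_image] at hx
    obtain ⟨a, ha, rfl⟩ := hx
    have := h2 a ha
    simp only [Finset.mem_Icc]; omega
  · rw [Finset.card_image_of_injOn hinj, hce]; omega
  · intro k hk
    have hfil : ((D.erase 1).image (· - 1)).filter (· ≤ k)
        = ((D.erase 1).filter (· ≤ k + 1)).image (· - 1) := by
      rw [Finset.filter_image]
      congr 1
      apply Finset.filter_congr
      intro x hx
      show x - 1 ≤ k ↔ x ≤ k + 1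
      omega
    rw [hfil, Finset.card_image_of_injOn (hinj.mono (Finset.filter_subset _ _)),
      Finset.filter_erase, Finset.card_erase_of_mem
        (Finset.mem_filter.mpr ⟨h1, by omega⟩)]
    have := hpre (k + 1) (by omega)
    have h1f : 1 ≤ (D.filter (· ≤ k + 1)).card :=
      Finset.card_pos.mpr ⟨1, Finset.mem_filter.mpr ⟨h1, by omega⟩⟩
    omega

lemma PathSet_zero_not_mem {m h : ℕ} {D : Finset ℕ} (hD : D ∈ PathSet m h) : 0 ∉ D := by
  intro hx
  have := (mem_PathSet.mp hD).1 hx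
  simp at this

lemma sum_up (m h : ℕ) :
    ∑ D ∈ (PathSet (m + 1) h).filter (fun D => 1 ∉ D), wgt h D = Swt m (h + 1) := by
  rw [Swt]
  symm
  apply Finset.sum_bij (i := fun D _ => D.image (· + 1))
  · intro D hD
    rw [Finset.mem_filter]
    exact ⟨image_succ_mem_PathSet hD, one_not_mem_image_succ (PathSet_zero_not_mem hD)⟩
  · intro a _ b _ hab
    exact Finset.image_injective (add_left_injective 1) hab
  · intro D hD
    rw [Finset.mem_filter] at hD
    obtain ⟨hD, h1⟩ := hD
    refine ⟨D.image (· - 1), shift_mem_PathSet hD h1, ?_⟩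
    apply eq_image_succ_of_one_not_mem
    intro x hx
    have := (mem_PathSet.mp hD).1 hx
    simp only [Finset.mem_Icc] at this
    rcases Nat.lt_or_ge x 2 with hc | hc
    · interval_cases x
      · omega
      · exact absurd hx h1
    · exact hc
  · intro D _
    exact (wgt_image_succ h D).symm

lemma sum_down (m h : ℕ) :
    ∑ D ∈ (PathSet (m + 1) (h + 1)).filter (fun D => 1 ∈ D), wgt (h + 1) D
      = (h + 1) * Swt m h := by
  rw [Swt, Finset.mul_sum]
  symm
  apply Finset.sum_bij (i := fun D _ => insert 1 (D.image (· + 1)))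
  · intro D hD
    rw [Finset.mem_filter]
    exact ⟨insert_one_mem_PathSet hD, Finset.mem_insert_self _ _⟩
  · intro a ha b hb hab
    have h0a := PathSet_zero_not_mem ha
    have h0b := PathSet_zero_not_mem hb
    have : a.image (· + 1) = b.image (· + 1) := by
      have := congrArg (Finset.erase · 1) hab
      simpa [Finset.erase_insert (one_not_mem_image_succ h0a),
        Finset.erase_insert (one_not_mem_image_succ h0b)] using this
    exact Finset.image_injective (add_left_injective 1) this
  · intro D hD
    rw [Finset.mem_filter] at hD
    obtain ⟨hD, h1⟩ := hD
    refine ⟨(D.erase 1).image (· - 1), erase_shift_mem_PathSet hD h1, ?_⟩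
    have hE : ((D.erase 1).image (· - 1)).image (· + 1) = D.erase 1 := by
      apply eq_image_succ_of_one_not_mem
      intro x hx
      rw [Finset.mem_erase] at hx
      have := (mem_PathSet.mp hD).1 hx.2
      simp only [Finset.mem_Icc] at this
      have := hx.1
      omega
    rw [hE, Finset.insert_erase h1]
  · intro D hD
    exact ((wgt_insert_one h (PathSet_zero_not_mem hD))).symm

/-- The key recursion. -/
lemma Swt_step (m h : ℕ) : Swt (m + 1) h = Swt m (h + 1) + h * Swt m (h - 1) := by
  classical
  have hsplit : Swt (m + 1) h =
      (∑ D ∈ (PathSet (m + 1) h).filter (fun D => 1 ∉ D), wgt h D)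
      + (∑ D ∈ (PathSet (m + 1) h).filter (fun D => ¬ (1 ∉ D)), wgt h D) :=
    (Finset.sum_filter_add_sum_filter_not (PathSet (m + 1) h) (fun D => 1 ∉ D) _).symm
  have hfe : (PathSet (m + 1) h).filter (fun D => ¬ (1 ∉ D))
      = (PathSet (m + 1) h).filter (fun D => 1 ∈ D) := by
    apply Finset.filter_congr
    intro D _
    simp
  rw [hsplit, hfe, sum_up]
  match h with
  | 0 =>
    have hempty : (PathSet (m + 1) 0).filter (fun D => 1 ∈ D) = ∅ := by
      rw [Finset.eq_empty_iff_forall_notMem]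
      intro D hD
      rw [Finset.mem_filter, mem_PathSet] at hD
      obtain ⟨⟨_, _, hpre⟩, h1⟩ := hD
      have := hpre 1 (by omega)
      have h1f : 1 ≤ (D.filter (· ≤ 1)).card :=
        Finset.card_pos.mpr ⟨1, Finset.mem_filter.mpr ⟨h1, le_refl 1⟩⟩
      omega
    rw [hempty, Finset.sum_empty]
    simp
  | h + 1 =>
    rw [sum_down]
    simp

lemma Swt_zero (h : ℕ) : Swt 0 h = if h = 0 then 1 else 0 := by
  have hicc : Finset.Icc 1 0 = (∅ : Finset ℕ) := by simp
  split_ifs with h0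
  · subst h0
    have hps : PathSet 0 0 = {∅} := by
      ext D
      rw [mem_PathSet, hicc, Finset.mem_singleton, Finset.subset_empty]
      constructor
      · rintro ⟨h1, _, _⟩; exact h1
      · rintro rfl
        refine ⟨rfl, by simp, fun k hk => by simp⟩
    rw [Swt, hps, Finset.sum_singleton, wgt]
    simp
  · have hps : PathSet 0 h = ∅ := by
      rw [Finset.eq_empty_iff_forall_notMem]
      intro D hD
      rw [mem_PathSet, hicc, Finset.subset_empty] at hD
      obtain ⟨rfl, hc, _⟩ := hD
      simp at hc
      omega
    rw [Swt, hps, Finset.sum_empty]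

lemma PathSet_eq_empty_of_lt {m h : ℕ} (hmh : m < h) : PathSet m h = ∅ := by
  rw [Finset.eq_empty_iff_forall_notMem]
  intro D hD
  rw [mem_PathSet] at hD
  have hle : D.card ≤ m := by
    have := Finset.card_le_card hD.1
    simpa using this
  omega

lemma Swt_of_lt {m h : ℕ} (hmh : m < h) : Swt m h = 0 := by
  rw [Swt, PathSet_eq_empty_of_lt hmh, Finset.sum_empty]

lemma Swt_closed : ∀ m h t : ℕ, m = h + 2 * t →
    Swt m h = h.factorial * m.choose (2 * t) * ∏ i ∈ Finset.range t, (2 * i + 1) := by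
  intro m
  induction m with
  | zero =>
    intro h t hm
    have h0 : h = 0 := by omega
    have t0 : t = 0 := by omega
    subst h0; subst t0
    rw [Swt_zero]
    simp
  | succ m ih =>
    intro h t hm
    rw [Swt_step]
    match t with
    | 0 =>
      -- h = m + 1
      have hh : h = m + 1 := by omega
      subst hh
      rw [Swt_of_lt (by omega), ih (m + 1 - 1) 0 (by omega)]
      simp [Nat.factorial_succ]
    | t + 1 =>
      match h with
      | 0 =>
        -- m = 2t + 1
        rw [ih 1 t (by omega)]
        have hm' : m = 2 * t + 1 := by omega
        have hc1 : m.choose (2 * t) = 2 * t + 1 := by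
          rw [hm']
          exact Nat.choose_succ_self_right _
        have hc2 : (m + 1).choose (2 * (t + 1)) = 1 := by
          rw [show m + 1 = 2 * (t + 1) by omega, Nat.choose_self]
        rw [hc1, hc2, Finset.prod_range_succ]
        simp [Nat.factorial_one]
        ring
      | h + 1 =>
        -- m = h + 1 + 2t + 1, so m = (h + 2) + 2t = h + 2(t+1)
        have e1 := ih (h + 2) t (by omega)
        have e2 := ih h (t + 1) (by omega)
        rw [show h + 1 + 1 = h + 2 from rfl, e1, show h + 1 - 1 = h from rfl, e2]
        rw [Finset.prod_range_succ]
        have pascal : (m + 1).choose (2 * (t + 1)) = m.choose (2 * t + 1) + m.choose (2 * t + 2) := by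
          rw [show 2 * (t + 1) = (2 * t + 1) + 1 by ring, Nat.choose_succ_succ']
        have key : m.choose (2 * t + 1) * (2 * t + 1) = m.choose (2 * t) * (h + 2) := by
          rw [Nat.choose_succ_right_eq]
          congr 1
          omega
        rw [pascal]
        have hfac2 : (h + 2).factorial = (h + 2) * (h + 1).factorial := Nat.factorial_succ _
        have hfac1 : (h + 1).factorial = (h + 1) * h.factorial := Nat.factorial_succ _
        rw [hfac2, hfac1]
        set P := ∏ i ∈ Finset.range t, (2 * i + 1) with hP
        set C0 := m.choose (2 * t)
        set C1 := m.choose (2 * t + 1)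
        set C2 := m.choose (2 * t + 2) with hC2
        rw [show 2 * (t + 1) = 2 * t + 2 by ring, ← hC2]
        zify
        zify at key
        linear_combination (-(h.factorial : ℤ)) * P * (h + 1) * key

end Aux12

/-- the number of Hermite histories of length `2n` (a Dyck path of length `2n`
together with a label between `1` and `h_i` on the `i`-th down step) is `1·3·5⋯(2n-1)`. -/
theorem stmt12 (n : ℕ) :
    Set.ncard {p : Finset ℕ × (Fin n → ℕ) |
        IsDyck (2 * n) p.1 ∧ ∀ i : Fin n, 1 ≤ p.2 i ∧ p.2 i ≤ ht p.1 ((i : ℕ) + 1)} =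
      ∏ i ∈ Finset.range n, (2 * i + 1) := by
  classical
  set F : Finset (Finset ℕ × (Fin n → ℕ)) :=
    (PathSet (2 * n) 0).biUnion (fun D =>
      (Fintype.piFinset (fun i : Fin n => Finset.Icc 1 (ht D ((i : ℕ) + 1)))).image
        (fun f => (D, f))) with hF
  have hps : ∀ D : Finset ℕ, D ∈ PathSet (2 * n) 0 ↔ IsDyck (2 * n) D := by
    intro D
    rw [mem_PathSet, IsDyck]
    constructor
    · rintro ⟨h1, h2, h3⟩
      exact ⟨h1, by omega, fun k hk => by have := h3 k hk; omega⟩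
    · rintro ⟨h1, h2, h3⟩
      exact ⟨h1, by omega, fun k hk => by have := h3 k hk; omega⟩
  have hmem : ∀ p : Finset ℕ × (Fin n → ℕ), p ∈ F ↔
      (IsDyck (2 * n) p.1 ∧ ∀ i : Fin n, 1 ≤ p.2 i ∧ p.2 i ≤ ht p.1 ((i : ℕ) + 1)) := by
    intro p
    rw [hF, Finset.mem_biUnion]
    constructor
    · rintro ⟨D, hD, hp⟩
      rw [Finset.mem_image] at hp
      obtain ⟨f, hf, rfl⟩ := hp
      rw [Fintype.mem_piFinset] at hf
      exact ⟨(hps D).mp hD, fun i => by simpa [Finset.mem_Icc] using hf i⟩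
    · rintro ⟨hdy, hlab⟩
      refine ⟨p.1, (hps p.1).mpr hdy, ?_⟩
      rw [Finset.mem_image]
      exact ⟨p.2, Fintype.mem_piFinset.mpr (fun i => Finset.mem_Icc.mpr (hlab i)), rfl⟩
  have hset : {p : Finset ℕ × (Fin n → ℕ) |
      IsDyck (2 * n) p.1 ∧ ∀ i : Fin n, 1 ≤ p.2 i ∧ p.2 i ≤ ht p.1 ((i : ℕ) + 1)} = ↑F := by
    ext p
    rw [Set.mem_setOf_eq, Finset.mem_coe, hmem p]
  rw [hset, Set.ncard_coe_finset]
  have hdisj : ∀ D1 ∈ PathSet (2 * n) 0, ∀ D2 ∈ PathSet (2 * n) 0, D1 ≠ D2 →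
      Disjoint ((Fintype.piFinset (fun i : Fin n => Finset.Icc 1 (ht D1 ((i : ℕ) + 1)))).image
        (fun f => (D1, f)))
        ((Fintype.piFinset (fun i : Fin n => Finset.Icc 1 (ht D2 ((i : ℕ) + 1)))).image
        (fun f => (D2, f))) := by
    intro D1 _ D2 _ hne
    rw [Finset.disjoint_left]
    intro p hp1 hp2
    rw [Finset.mem_image] at hp1 hp2
    obtain ⟨f1, _, rfl⟩ := hp1
    obtain ⟨f2, _, heq⟩ := hp2
    exact hne (congrArg Prod.fst heq).symm
  rw [hF, Finset.card_biUnion hdisj]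
  have hcard : ∀ D ∈ PathSet (2 * n) 0,
      ((Fintype.piFinset (fun i : Fin n => Finset.Icc 1 (ht D ((i : ℕ) + 1)))).image
        (fun f => (D, f))).card = wgt 0 D := by
    intro D hD
    have hinj : Function.Injective (fun f : Fin n → ℕ => (D, f)) := by
      intro f g hfg
      exact congrArg Prod.snd hfg
    rw [Finset.card_image_of_injective _ hinj, Fintype.card_piFinset]
    have hDcard : D.card = n := by
      have := (mem_PathSet.mp hD).2.1; omega
    calc (∏ i : Fin n, (Finset.Icc 1 (ht D ((i : ℕ) + 1))).card)
        = ∏ i : Fin n, ht D ((i : ℕ) + 1) := by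
          apply Finset.prod_congr rfl
          intro i _
          rw [Nat.card_Icc]
          omega
      _ = ∏ j ∈ Finset.range n, ht D (j + 1) :=
          Fin.prod_univ_eq_prod_range (fun j => ht D (j + 1)) n
      _ = wgt 0 D := by
          rw [wgt, hDcard]
          apply Finset.prod_congr rfl
          intro j _
          rw [ht, dstep]
          have : j + 1 - 1 = j := rfl
          rw [this]
          omega
  rw [Finset.sum_congr rfl hcard]
  have : ∑ D ∈ PathSet (2 * n) 0, wgt 0 D = Swt (2 * n) 0 := rfl
  rw [this, Swt_closed (2 * n) 0 n (by ring)]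
  simp [Nat.choose_self]
end
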